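/- arXiv:1504.06943 — 4 statements merged into one kernel-verified Lean document; each statement's English description precedes it below -/
import Mathlib

section
/- Let D₁, D₂ be finite sets, X₁, X₂, Z₁, Z₂ finite-dimensional complex inner product spaces, and A = (A_{xy}), Δ = (Δ_{xy}) families of linear maps as in the definition of the relative γ₂-norm. If A_{xy} = 0 for every pair (x,y) with Δ_{xy} = 0, then γ₂(A|Δ) is finite; moreover γ₂(A|Δ) ≤ Σ_{x∈D₁, y∈D₂} ‖A_{xy}‖_tr / ‖Δ_{xy}‖, where ‖·‖_tr is the trace norm (sum of singular values), ‖·‖ is the operator norm, and a summand with Δ_{xy} = 0 (hence A_{xy} = 0) is taken to be 0. -/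
noncomputable section

open scoped ENNReal ComplexOrder
open scoped InnerProductSpace Matrix

/-- A linear endomorphism of a finite-dimensional complex inner product space is unitary. -/
def IsUnitaryMap {E : Type*} [NormedAddCommGroup E] [InnerProductSpace ℂ E]
    [FiniteDimensional ℂ E] (f : E →ₗ[ℂ] E) : Prop :=
  LinearMap.adjoint f ∘ₗ f = LinearMap.id ∧ f ∘ₗ LinearMap.adjoint f = LinearMap.id

/-- Operator norm of a linear map between finite-dimensional inner product spaces. -/
noncomputable def opNorm {E F : Type*} [NormedAddCommGroup E] [InnerProductSpace ℂ E]
    [NormedAddCommGroup F] [InnerProductSpace ℂ F] [FiniteDimensional ℂ E]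
    (f : E →ₗ[ℂ] F) : ℝ :=
  ‖LinearMap.toContinuousLinearMap f‖

/-- A complex scalar viewed as a linear map `ℂ → ℂ`. -/
noncomputable def scalarMap (c : ℂ) : ℂ →ₗ[ℂ] ℂ := c • LinearMap.id

/-- The block-diagonal map `⊕ᵢ Δᵢ` on an `ℓ²`-direct sum of copies of a space. -/
noncomputable def piBlock {ι : Type*} [Fintype ι] {X₁ X₂ : Type*}
    [NormedAddCommGroup X₁] [InnerProductSpace ℂ X₁]
    [NormedAddCommGroup X₂] [InnerProductSpace ℂ X₂]
    (Δ : ι → (X₂ →ₗ[ℂ] X₁)) :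
    PiLp 2 (fun _ : ι => X₂) →ₗ[ℂ] PiLp 2 (fun _ : ι => X₁) :=
  (WithLp.linearEquiv 2 ℂ (∀ _ : ι, X₁)).symm.toLinearMap ∘ₗ
    (LinearMap.pi fun i => Δ i ∘ₗ LinearMap.proj i) ∘ₗ
      (WithLp.linearEquiv 2 ℂ (∀ _ : ι, X₂)).toLinearMap

/-- The relative `γ₂`-norm `γ₂(A | Δ)` of a family `A = (A_{xy} : Z₂ → Z₁)` relative to a
family `Δ = (Δ_{xy} : X₂ → X₁)`: the infimum over `k ∈ ℕ` and factorizations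
`A_{xy} = Υ_x* ∘ (Δ_{xy} ⊗ id_{ℂᵏ}) ∘ Φ_y` of `max (max_x ‖Υ_x‖²) (max_y ‖Φ_y‖²)`,
where `X ⊗ ℂᵏ` is realized as the `ℓ²`-direct sum of `k` copies of `X`.
The infimum of the empty set is `+∞`. -/
noncomputable def relGamma2 {D₁ D₂ : Type*} [Fintype D₁] [Fintype D₂]
    {X₁ X₂ Z₁ Z₂ : Type*}
    [NormedAddCommGroup X₁] [InnerProductSpace ℂ X₁] [FiniteDimensional ℂ X₁]
    [NormedAddCommGroup X₂] [InnerProductSpace ℂ X₂] [FiniteDimensional ℂ X₂]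
    [NormedAddCommGroup Z₁] [InnerProductSpace ℂ Z₁] [FiniteDimensional ℂ Z₁]
    [NormedAddCommGroup Z₂] [InnerProductSpace ℂ Z₂] [FiniteDimensional ℂ Z₂]
    (A : D₁ → D₂ → (Z₂ →ₗ[ℂ] Z₁)) (Δ : D₁ → D₂ → (X₂ →ₗ[ℂ] X₁)) : ℝ≥0∞ :=
  ⨅ (k : ℕ) (Υ : D₁ → (Z₁ →ₗ[ℂ] PiLp 2 (fun _ : Fin k => X₁)))
    (Φ : D₂ → (Z₂ →ₗ[ℂ] PiLp 2 (fun _ : Fin k => X₂)))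
    (_ : ∀ x y, A x y =
      LinearMap.adjoint (Υ x) ∘ₗ piBlock (fun _ : Fin k => Δ x y) ∘ₗ Φ y),
    (⨆ x, ENNReal.ofReal (opNorm (Υ x) ^ 2)) ⊔ (⨆ y, ENNReal.ofReal (opNorm (Φ y) ^ 2))

/-- Trace norm (sum of singular values) of a linear map between finite-dimensional
complex inner product spaces, computed as the trace of `√(AᴴA)` in matrix form. -/
noncomputable def traceNorm {E F : Type*} [NormedAddCommGroup E] [InnerProductSpace ℂ E]
    [NormedAddCommGroup F] [InnerProductSpace ℂ F] [FiniteDimensional ℂ E]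
    [FiniteDimensional ℂ F] (f : E →ₗ[ℂ] F) : ℝ :=
  (let hA := Matrix.posSemidef_conjTranspose_mul_self
      (LinearMap.toMatrix (stdOrthonormalBasis ℂ E).toBasis
        (stdOrthonormalBasis ℂ F).toBasis f);
    ((hA.1.eigenvectorUnitary.1 *
        Matrix.diagonal (fun i => ((Real.sqrt (hA.1.eigenvalues i) : ℝ) : ℂ)) *
        (star hA.1.eigenvectorUnitary : Matrix _ _ ℂ)).trace)).re

lemma sqrt_expr_eq {n : Type} [Fintype n] [DecidableEq n] (M G : Matrix n n ℂ)
    (hM : M.PosSemidef) (hG : G.PosSemidef) (h : G ^ 2 = M) :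
    hM.1.eigenvectorUnitary.1 * Matrix.diagonal (fun i => ((Real.sqrt (hM.1.eigenvalues i) : ℝ) : ℂ)) *
        (star hM.1.eigenvectorUnitary : Matrix _ _ ℂ) = G := by
  open scoped MatrixOrder Matrix.Norms.L2Operator in
  have h1 : CFC.sqrt M = G :=
    CFC.sqrt_unique (by rw [← pow_two]; exact h) (Matrix.nonneg_iff_posSemidef.mpr hG)
  open scoped MatrixOrder Matrix.Norms.L2Operator in
  rw [← h1, CFC.sqrt_eq_real_sqrt M (Matrix.nonneg_iff_posSemidef.mpr hM), cfcₙ_eq_cfc,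
    hM.1.cfc_eq]
  simp [Matrix.IsHermitian.cfc, Function.comp_def]

section AUX
set_option linter.unusedSectionVars false
variable {E F : Type} [NormedAddCommGroup E] [InnerProductSpace ℂ E] [FiniteDimensional ℂ E]
  [NormedAddCommGroup F] [InnerProductSpace ℂ F] [FiniteDimensional ℂ F]

/-- rank one map z ↦ ⟪b, z⟫ • a -/
def rankOne (a : F) (b : E) : E →ₗ[ℂ] F where
  toFun z := ⟪b, z⟫_ℂ • a
  map_add' x y := by simp [inner_add_right, add_smul]
  map_smul' c x := by simp [inner_smul_right, smul_smul]

@[simp] lemma rankOne_apply (a : F) (b : E) (z : E) : rankOne a b z = ⟪b, z⟫_ℂ • a := rfl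

lemma svd_decomp (f : E →ₗ[ℂ] F) :
    ∃ (s : Fin (Module.finrank ℂ E) → ℝ) (v : Fin (Module.finrank ℂ E) → E)
      (e : Fin (Module.finrank ℂ E) → F),
      (∀ i, 0 ≤ s i) ∧ (∀ i, ‖v i‖ ≤ 1) ∧ (∀ i, ‖e i‖ ≤ 1) ∧
      (∀ z, f z = ∑ i, s i • (⟪v i, z⟫_ℂ • e i)) ∧
      (∑ i, s i = traceNorm f) := by
  have hT : (LinearMap.adjoint f ∘ₗ f).IsSymmetric := fun x y => by
    simp only [LinearMap.comp_apply, LinearMap.adjoint_inner_left, LinearMap.adjoint_inner_right]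
  obtain ⟨v, μ, hTv⟩ : ∃ (v : OrthonormalBasis (Fin (Module.finrank ℂ E)) ℂ E)
      (μ : Fin (Module.finrank ℂ E) → ℝ),
      ∀ i, (LinearMap.adjoint f ∘ₗ f) (v i) = (μ i : ℂ) • v i :=
    ⟨hT.eigenvectorBasis rfl, hT.eigenvalues rfl, fun i => hT.apply_eigenvectorBasis rfl i⟩
  have hvnorm : ∀ i, ‖v i‖ = 1 := fun i => v.orthonormal.1 i
  have hμeq : ∀ i, (μ i : ℂ) = (‖f (v i)‖ : ℂ) ^ 2 := by
    intro i
    have h1 : ⟪v i, (LinearMap.adjoint f ∘ₗ f) (v i)⟫_ℂ = (‖f (v i)‖ : ℂ) ^ 2 := by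
      rw [LinearMap.comp_apply, LinearMap.adjoint_inner_right, inner_self_eq_norm_sq_to_K]
      norm_cast
    have h2 : ⟪v i, (LinearMap.adjoint f ∘ₗ f) (v i)⟫_ℂ = (μ i : ℂ) := by
      rw [hTv i, inner_smul_right, inner_self_eq_norm_sq_to_K, hvnorm i]
      norm_num
    rw [← h2, h1]
  have hμreal : ∀ i, μ i = ‖f (v i)‖ ^ 2 := by
    intro i
    have := hμeq i
    exact_mod_cast this
  refine ⟨fun i => ‖f (v i)‖, v, fun i => (‖f (v i)‖ : ℂ)⁻¹ • f (v i),
    fun i => norm_nonneg _, fun i => le_of_eq (hvnorm i), ?_, ?_, ?_⟩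
  · intro i
    by_cases hz : f (v i) = 0
    · simp [hz]
    · rw [norm_smul]
      simp [norm_ne_zero_iff.mpr hz, inv_mul_cancel₀ (norm_ne_zero_iff.mpr hz)]
  · have hfe : ∀ i, f (v i) = ‖f (v i)‖ • (‖f (v i)‖ : ℂ)⁻¹ • f (v i) := by
      intro i
      by_cases hz : f (v i) = 0
      · simp [hz]
      · rw [← Complex.coe_smul, smul_smul, mul_inv_cancel₀
          (by exact_mod_cast norm_ne_zero_iff.mpr hz), one_smul]
    intro z
    conv_lhs => rw [← v.sum_repr' z, map_sum]
    refine Finset.sum_congr rfl fun i _ => ?_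
    rw [map_smul]
    rw [smul_comm]
    exact congrArg _ (hfe i)
  · -- trace computation
    classical
    set r : E →ₗ[ℂ] E := ∑ i, (Real.sqrt ‖f (v i)‖ : ℂ) • rankOne (v i) (v i) with hrdef
    have hrv : ∀ j, r (v j) = (Real.sqrt ‖f (v j)‖ : ℂ) • v j := by
      intro j
      rw [hrdef]
      rw [LinearMap.sum_apply]
      rw [Finset.sum_eq_single j]
      · simp [orthonormal_iff_ite.mp v.orthonormal]
      · intro i _ hij
        simp [orthonormal_iff_ite.mp v.orthonormal, hij]
      · simp
    have hrsym : LinearMap.adjoint r = r := by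
      refine ((LinearMap.eq_adjoint_iff r r).mpr fun x y => ?_).symm
      rw [hrdef]
      simp only [LinearMap.sum_apply, LinearMap.smul_apply, rankOne_apply, sum_inner,
        inner_sum, smul_smul, inner_smul_left, inner_smul_right, map_mul,
        Complex.conj_ofReal, inner_conj_symm]
      exact Finset.sum_congr rfl fun i _ => by ring
    set g : E →ₗ[ℂ] E := LinearMap.adjoint r ∘ₗ r with hgdef
    have hgv : ∀ j, g (v j) = (‖f (v j)‖ : ℂ) • v j := by
      intro j
      rw [hgdef, LinearMap.comp_apply, hrv, map_smul, hrsym, hrv, smul_smul]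
      congr 1
      rw [← Complex.ofReal_mul, Real.mul_self_sqrt (norm_nonneg _)]
    have hgg : g ∘ₗ g = LinearMap.adjoint f ∘ₗ f := by
      apply v.toBasis.ext
      intro j
      rw [OrthonormalBasis.coe_toBasis]
      rw [LinearMap.comp_apply, hgv, map_smul, hgv, smul_smul, hTv]
      congr 1
      rw [← Complex.ofReal_mul, hμeq j]
      push_cast
      ring
    -- matrix side
    have hM : (LinearMap.toMatrix (stdOrthonormalBasis ℂ E).toBasis
        (stdOrthonormalBasis ℂ F).toBasis f)ᴴ *
        (LinearMap.toMatrix (stdOrthonormalBasis ℂ E).toBasis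
          (stdOrthonormalBasis ℂ F).toBasis f) =
        LinearMap.toMatrix (stdOrthonormalBasis ℂ E).toBasis
          (stdOrthonormalBasis ℂ E).toBasis (LinearMap.adjoint f ∘ₗ f) := by
      rw [← LinearMap.toMatrix_adjoint (stdOrthonormalBasis ℂ E) (stdOrthonormalBasis ℂ F) f]
      rw [← LinearMap.toMatrix_comp (stdOrthonormalBasis ℂ E).toBasis
        (stdOrthonormalBasis ℂ F).toBasis (stdOrthonormalBasis ℂ E).toBasis]
    set G := LinearMap.toMatrix (stdOrthonormalBasis ℂ E).toBasis
      (stdOrthonormalBasis ℂ E).toBasis g with hGdef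
    have hGpsd : G.PosSemidef := by
      have : G = (LinearMap.toMatrix (stdOrthonormalBasis ℂ E).toBasis
          (stdOrthonormalBasis ℂ E).toBasis r)ᴴ *
          (LinearMap.toMatrix (stdOrthonormalBasis ℂ E).toBasis
            (stdOrthonormalBasis ℂ E).toBasis r) := by
        rw [hGdef, hgdef, LinearMap.toMatrix_comp (stdOrthonormalBasis ℂ E).toBasis
          (stdOrthonormalBasis ℂ E).toBasis (stdOrthonormalBasis ℂ E).toBasis,
          LinearMap.toMatrix_adjoint (stdOrthonormalBasis ℂ E) (stdOrthonormalBasis ℂ E) r]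
      rw [this]
      exact Matrix.posSemidef_conjTranspose_mul_self _
    have hGsq : G ^ 2 = (LinearMap.toMatrix (stdOrthonormalBasis ℂ E).toBasis
        (stdOrthonormalBasis ℂ F).toBasis f)ᴴ *
        (LinearMap.toMatrix (stdOrthonormalBasis ℂ E).toBasis
          (stdOrthonormalBasis ℂ F).toBasis f) := by
      rw [hM, pow_two, hGdef, ← LinearMap.toMatrix_comp (stdOrthonormalBasis ℂ E).toBasis
        (stdOrthonormalBasis ℂ E).toBasis (stdOrthonormalBasis ℂ E).toBasis, hgg]
    have hGsqrt := sqrt_expr_eq _ G (Matrix.posSemidef_conjTranspose_mul_self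
      (LinearMap.toMatrix (stdOrthonormalBasis ℂ E).toBasis
        (stdOrthonormalBasis ℂ F).toBasis f)) hGpsd hGsq
    simp only [traceNorm, hGsqrt]
    have htrace : G.trace = Matrix.trace (LinearMap.toMatrix v.toBasis v.toBasis g) := by
      rw [hGdef, ← LinearMap.trace_eq_matrix_trace, ← LinearMap.trace_eq_matrix_trace]
    rw [htrace]
    rw [Matrix.trace]
    have hdiag : ∀ j, (LinearMap.toMatrix v.toBasis v.toBasis g).diag j = (‖f (v j)‖ : ℂ) := by
      intro j
      rw [Matrix.diag, LinearMap.toMatrix_apply, OrthonormalBasis.coe_toBasis, hgv, map_smul,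
        Finsupp.smul_apply, ← OrthonormalBasis.coe_toBasis v, Module.Basis.repr_self]
      simp [Finsupp.single_apply]
    rw [Finset.sum_congr rfl fun j _ => hdiag j]
    rw [Complex.re_sum]
    simp

lemma opNorm_eq_zero_iff (f : E →ₗ[ℂ] F) : opNorm f = 0 ↔ f = 0 := by
  rw [opNorm, norm_eq_zero]
  constructor
  · intro hc
    have := congrArg (fun (g : E →L[ℂ] F) => (g : E →ₗ[ℂ] F)) hc
    simpa using this
  · intro hc
    ext z
    simp [hc]

lemma exists_attain (Δ : E →ₗ[ℂ] F) (hΔ : Δ ≠ 0) :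
    ∃ (u : E) (w : F), ‖u‖ ≤ 1 ∧ ‖w‖ ≤ 1 ∧ ⟪w, Δ u⟫_ℂ = (opNorm Δ : ℂ) := by
  set Δ' := LinearMap.toContinuousLinearMap Δ with hΔ'def
  have hΔ' : Δ' ≠ 0 := by
    intro hc
    apply hΔ
    have := congrArg (fun (g : E →L[ℂ] F) => (g : E →ₗ[ℂ] F)) hc
    simpa [hΔ'def] using this
  obtain ⟨z, hz⟩ : ∃ z, Δ z ≠ 0 := by
    by_contra hc
    push_neg at hc
    exact hΔ (LinearMap.ext fun z => by simp [hc z])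
  have hzne : z ≠ 0 := fun hz0 => hz (by simp [hz0])
  have hsne : (Metric.sphere (0 : E) 1).Nonempty := by
    refine ⟨‖z‖⁻¹ • z, ?_⟩
    simp [norm_smul, inv_mul_cancel₀ (norm_ne_zero_iff.mpr hzne)]
  obtain ⟨u, humem, hmax⟩ := (isCompact_sphere (0 : E) 1).exists_isMaxOn hsne
    (Continuous.continuousOn (by continuity : Continuous fun y => ‖Δ' y‖))
  have hunorm : ‖u‖ = 1 := by simpa using humem
  have hle : ∀ y ∈ Metric.sphere (0 : E) 1, ‖Δ' y‖ ≤ ‖Δ' u‖ := fun y hy => hmax hy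
  have hopeq : ‖Δ'‖ = ‖Δ' u‖ := by
    refine le_antisymm ?_ ?_
    · refine ContinuousLinearMap.opNorm_le_bound _ (norm_nonneg _) fun y => ?_
      by_cases hy : y = 0
      · simp [hy]
      · have hy' : ‖y‖⁻¹ • y ∈ Metric.sphere (0 : E) 1 := by
          simp [norm_smul, inv_mul_cancel₀ (norm_ne_zero_iff.mpr hy)]
        have := hle _ hy'
        rw [show (‖y‖⁻¹ • y : E) = ((‖y‖⁻¹ : ℝ) : ℂ) • y from (Complex.coe_smul _ _).symm,
          map_smul, norm_smul] at this
        simp only [Complex.norm_real, norm_inv, norm_norm] at this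
        calc ‖Δ' y‖ = ‖y‖ * (‖y‖⁻¹ * ‖Δ' y‖) := by
              rw [← mul_assoc, mul_inv_cancel₀ (norm_ne_zero_iff.mpr hy), one_mul]
            _ ≤ ‖y‖ * ‖Δ' u‖ := by
              exact mul_le_mul_of_nonneg_left this (norm_nonneg _)
            _ = ‖Δ' u‖ * ‖y‖ := mul_comm _ _
    · calc ‖Δ' u‖ ≤ ‖Δ'‖ * ‖u‖ := Δ'.le_opNorm u
        _ = ‖Δ'‖ := by rw [hunorm, mul_one]
  have hΔu : Δ u ≠ 0 := by
    intro hc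
    have h1 : ‖Δ'‖ ≠ 0 := norm_ne_zero_iff.mpr hΔ'
    apply h1
    rw [hopeq]
    simpa [hΔ'def] using congrArg norm hc
  refine ⟨u, ‖Δ u‖⁻¹ • Δ u, le_of_eq hunorm, ?_, ?_⟩
  · rw [norm_smul]
    simp [inv_mul_cancel₀ (norm_ne_zero_iff.mpr hΔu)]
  · rw [show (‖Δ u‖⁻¹ • Δ u : F) = ((‖Δ u‖⁻¹ : ℝ) : ℂ) • Δ u from (Complex.coe_smul _ _).symm,
      inner_smul_left, inner_self_eq_norm_sq_to_K]
    have hΔ'u : Δ' u = Δ u := rfl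
    rw [opNorm, ← hΔ'def, hopeq, hΔ'u]
    have hne : (‖Δ u‖ : ℂ) ≠ 0 := by exact_mod_cast norm_ne_zero_iff.mpr hΔu
    push_cast
    rw [map_inv₀, Complex.conj_ofReal]
    field_simp
    rfl

end AUX

set_option maxHeartbeats 2000000

/-- If `A_{xy} = 0` whenever `Δ_{xy} = 0`, then `γ₂(A|Δ)` is finite, and
`γ₂(A|Δ) ≤ Σ_{x,y} ‖A_{xy}‖_tr / ‖Δ_{xy}‖` (summands with `Δ_{xy} = 0` are `0`,
by the convention `0/0 = 0`). -/
theorem statement0 {D₁ D₂ : Type} [Fintype D₁] [Fintype D₂]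
    {X₁ X₂ Z₁ Z₂ : Type}
    [NormedAddCommGroup X₁] [InnerProductSpace ℂ X₁] [FiniteDimensional ℂ X₁]
    [NormedAddCommGroup X₂] [InnerProductSpace ℂ X₂] [FiniteDimensional ℂ X₂]
    [NormedAddCommGroup Z₁] [InnerProductSpace ℂ Z₁] [FiniteDimensional ℂ Z₁]
    [NormedAddCommGroup Z₂] [InnerProductSpace ℂ Z₂] [FiniteDimensional ℂ Z₂]
    (A : D₁ → D₂ → (Z₂ →ₗ[ℂ] Z₁)) (Δ : D₁ → D₂ → (X₂ →ₗ[ℂ] X₁))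
    (h : ∀ x y, Δ x y = 0 → A x y = 0) :
    relGamma2 A Δ ≠ ⊤ ∧
      relGamma2 A Δ ≤
        ENNReal.ofReal (∑ x, ∑ y, traceNorm (A x y) / opNorm (Δ x y)) := by
  classical
  have hS0 : ∀ (x : D₁) (y : D₂), 0 ≤ traceNorm (A x y) / opNorm (Δ x y) := by
    intro x y
    obtain ⟨s, v, e, hs0, -, -, -, htr⟩ := svd_decomp (A x y)
    exact div_nonneg (htr ▸ Finset.sum_nonneg fun i _ => hs0 i) (norm_nonneg _)
  set S : ℝ := ∑ x, ∑ y, traceNorm (A x y) / opNorm (Δ x y) with hSdef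
  have hS : 0 ≤ S :=
    Finset.sum_nonneg fun x _ => Finset.sum_nonneg fun y _ => hS0 x y
  choose s v e hs0 hv1 he1 hdecomp htr using fun (x : D₁) (y : D₂) => svd_decomp (A x y)
  have key : ∀ x y, ∃ (u : X₂) (w : X₁), ‖u‖ ≤ 1 ∧ ‖w‖ ≤ 1 ∧
      ⟪w, (Δ x y) u⟫_ℂ = (opNorm (Δ x y) : ℂ) := by
    intro x y
    by_cases hzero : Δ x y = 0
    · refine ⟨0, 0, by simp, by simp, ?_⟩
      rw [hzero]
      simp [opNorm]
    · exact exists_attain _ hzero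
  choose u w hu hw huw using key
  have hd0 : ∀ x y, (0:ℝ) ≤ opNorm (Δ x y) := fun x y => norm_nonneg _
  set c : D₁ → D₂ → Fin (Module.finrank ℂ Z₂) → ℝ :=
    fun x y i => Real.sqrt (s x y i / opNorm (Δ x y)) with hcdef
  have hc0 : ∀ x y i, 0 ≤ c x y i := fun _ _ _ => Real.sqrt_nonneg _
  have hcsq : ∀ x y i, c x y i ^ 2 = s x y i / opNorm (Δ x y) := fun x y i =>
    Real.sq_sqrt (div_nonneg (hs0 x y i) (hd0 x y))
  set k := Fintype.card (D₁ × D₂ × Fin (Module.finrank ℂ Z₂)) with hkdef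
  set Eqv : (D₁ × D₂ × Fin (Module.finrank ℂ Z₂)) ≃ Fin k := Fintype.equivFin _ with hEqv
  set ΥC : D₁ → (D₁ × D₂ × Fin (Module.finrank ℂ Z₂)) → (Z₁ →ₗ[ℂ] X₁) := fun x p =>
    if p.1 = x then (c x p.2.1 p.2.2 : ℂ) • rankOne (w x p.2.1) (e x p.2.1 p.2.2)
    else 0 with hΥC
  set ΦC : D₂ → (D₁ × D₂ × Fin (Module.finrank ℂ Z₂)) → (Z₂ →ₗ[ℂ] X₂) := fun y p =>
    if p.2.1 = y then (c p.1 y p.2.2 : ℂ) • rankOne (u p.1 y) (v p.1 y p.2.2)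
    else 0 with hΦC
  set Υ : D₁ → (Z₁ →ₗ[ℂ] PiLp 2 (fun _ : Fin k => X₁)) := fun x =>
    (WithLp.linearEquiv 2 ℂ (∀ _ : Fin k, X₁)).symm.toLinearMap ∘ₗ
      LinearMap.pi (fun j => ΥC x (Eqv.symm j)) with hΥ
  set Φ : D₂ → (Z₂ →ₗ[ℂ] PiLp 2 (fun _ : Fin k => X₂)) := fun y =>
    (WithLp.linearEquiv 2 ℂ (∀ _ : Fin k, X₂)).symm.toLinearMap ∘ₗ
      LinearMap.pi (fun j => ΦC y (Eqv.symm j)) with hΦ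
  have hΥapp : ∀ x t j, (Υ x t : ∀ _ : Fin k, X₁) j = ΥC x (Eqv.symm j) t := fun _ _ _ => rfl
  have hΦapp : ∀ y z j, (Φ y z : ∀ _ : Fin k, X₂) j = ΦC y (Eqv.symm j) z := fun _ _ _ => rfl
  have hpiB : ∀ (g : X₂ →ₗ[ℂ] X₁) (p : PiLp 2 (fun _ : Fin k => X₂)) (j : Fin k),
      (piBlock (fun _ : Fin k => g) p : ∀ _ : Fin k, X₁) j = g (p j) := fun _ _ _ => rfl
  have hfact : ∀ x y, A x y =
      LinearMap.adjoint (Υ x) ∘ₗ piBlock (fun _ : Fin k => Δ x y) ∘ₗ Φ y := by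
    intro x y
    apply LinearMap.ext; intro z
    refine ext_inner_left ℂ fun t => ?_
    rw [LinearMap.comp_apply, LinearMap.comp_apply, LinearMap.adjoint_inner_right,
      PiLp.inner_apply]
    have hsum : ∀ j : Fin k, ⟪(Υ x t : ∀ _ : Fin k, X₁) j,
        (piBlock (fun _ : Fin k => Δ x y) (Φ y z) : ∀ _ : Fin k, X₁) j⟫_ℂ
        = ⟪ΥC x (Eqv.symm j) t, Δ x y (ΦC y (Eqv.symm j) z)⟫_ℂ := fun j => by
      rw [hpiB, hΥapp, hΦapp]
    rw [Finset.sum_congr rfl fun j _ => hsum j]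
    rw [Equiv.sum_comp Eqv.symm (fun p => ⟪ΥC x p t, Δ x y (ΦC y p z)⟫_ℂ)]
    rw [Fintype.sum_prod_type]
    rw [Finset.sum_eq_single x (fun b _ hb => by simp [hΥC, hb])
      (fun hx => absurd (Finset.mem_univ x) hx)]
    rw [Fintype.sum_prod_type]
    rw [Finset.sum_eq_single y (fun b _ hb => by simp [hΦC, hb])
      (fun hy => absurd (Finset.mem_univ y) hy)]
    simp only [hΥC, hΦC, if_pos rfl]
    by_cases hzero : Δ x y = 0
    · simp [hzero, h x y hzero]
    · have dne : opNorm (Δ x y) ≠ 0 := fun hc => hzero (opNorm_eq_zero_iff _ |>.mp hc)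
      conv_lhs => rw [hdecomp x y z]
      rw [inner_sum]
      refine Finset.sum_congr rfl fun i _ => ?_
      rw [show (s x y i • (⟪v x y i, z⟫_ℂ • e x y i) : Z₁)
          = ((s x y i : ℝ) : ℂ) • (⟪v x y i, z⟫_ℂ • e x y i) from (Complex.coe_smul _ _).symm]
      simp only [LinearMap.smul_apply, rankOne_apply, map_smul, inner_smul_left,
        inner_smul_right, Complex.conj_ofReal, inner_conj_symm, huw x y]
      have hcd : (c x y i : ℂ) * (c x y i) * (opNorm (Δ x y)) = (s x y i : ℂ) := by
        have : c x y i * c x y i * opNorm (Δ x y) = s x y i := by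
          have h2 : c x y i * c x y i = s x y i / opNorm (Δ x y) := by
            rw [← pow_two]; exact hcsq x y i
          rw [h2, div_mul_cancel₀ _ dne]
        exact_mod_cast congrArg (fun r : ℝ => (r : ℂ)) this
      rw [← hcd]
      ring
  have hsumS : ∑ p : D₁ × D₂ × Fin (Module.finrank ℂ Z₂),
      s p.1 p.2.1 p.2.2 / opNorm (Δ p.1 p.2.1) = S := by
    rw [Fintype.sum_prod_type, hSdef]
    refine Finset.sum_congr rfl fun x' _ => ?_
    rw [Fintype.sum_prod_type]
    refine Finset.sum_congr rfl fun y' _ => ?_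
    show (∑ i, s x' y' i / opNorm (Δ x' y')) = traceNorm (A x' y') / opNorm (Δ x' y')
    rw [← Finset.sum_div, htr x' y']
  have hΥnorm : ∀ x, opNorm (Υ x) ≤ Real.sqrt S := by
    intro x
    show ‖LinearMap.toContinuousLinearMap (Υ x)‖ ≤ Real.sqrt S
    refine ContinuousLinearMap.opNorm_le_bound _ (Real.sqrt_nonneg _) fun t => ?_
    rw [LinearMap.coe_toContinuousLinearMap']
    have hsq : ‖Υ x t‖ ^ 2 ≤ S * ‖t‖ ^ 2 := by
      rw [PiLp.norm_sq_eq_of_L2]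
      rw [Finset.sum_congr rfl fun (j : Fin k) _ =>
        congrArg (fun r : X₁ => ‖r‖ ^ 2) (hΥapp x t j)]
      rw [Equiv.sum_comp Eqv.symm (fun p => ‖ΥC x p t‖ ^ 2)]
      have h2 : ∀ p : D₁ × D₂ × Fin (Module.finrank ℂ Z₂),
          ‖ΥC x p t‖ ^ 2 ≤ (s p.1 p.2.1 p.2.2 / opNorm (Δ p.1 p.2.1)) * ‖t‖ ^ 2 := by
        rintro ⟨x', y', i⟩
        by_cases hxx : x' = x
        · subst hxx
          simp only [hΥC, if_pos rfl, LinearMap.smul_apply, rankOne_apply]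
          rw [norm_smul, norm_smul]
          have hc' : ‖((c x' y' i : ℝ) : ℂ)‖ = c x' y' i := by
            rw [Complex.norm_real, Real.norm_eq_abs, abs_of_nonneg (hc0 x' y' i)]
          rw [hc']
          have hab : ‖⟪e x' y' i, t⟫_ℂ‖ * ‖w x' y'‖ ≤ ‖t‖ := by
            calc ‖⟪e x' y' i, t⟫_ℂ‖ * ‖w x' y'‖ ≤ (‖e x' y' i‖ * ‖t‖) * 1 := by
                  refine mul_le_mul (norm_inner_le_norm _ _) (hw x' y') (norm_nonneg _) ?_
                  exact mul_nonneg (norm_nonneg _) (norm_nonneg _)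
              _ ≤ (1 * ‖t‖) * 1 := by
                  have := he1 x' y' i
                  nlinarith [norm_nonneg t]
              _ = ‖t‖ := by ring
          calc (c x' y' i * (‖⟪e x' y' i, t⟫_ℂ‖ * ‖w x' y'‖)) ^ 2
              = c x' y' i ^ 2 * (‖⟪e x' y' i, t⟫_ℂ‖ * ‖w x' y'‖) ^ 2 := by ring
            _ ≤ c x' y' i ^ 2 * ‖t‖ ^ 2 := by
                refine mul_le_mul_of_nonneg_left ?_ (sq_nonneg _)
                exact pow_le_pow_left₀ (mul_nonneg (norm_nonneg _) (norm_nonneg _)) hab 2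
            _ = s x' y' i / opNorm (Δ x' y') * ‖t‖ ^ 2 := by rw [hcsq]
        · simp only [hΥC, if_neg hxx, LinearMap.zero_apply, norm_zero]
          have : (0:ℝ) ^ 2 = 0 := by norm_num
          rw [this]
          exact mul_nonneg (div_nonneg (hs0 _ _ _) (hd0 _ _)) (sq_nonneg _)
      refine le_trans (Finset.sum_le_sum fun p _ => h2 p) ?_
      rw [← Finset.sum_mul, hsumS]
    have h4 : ‖Υ x t‖ ≤ Real.sqrt (S * ‖t‖ ^ 2) := by
      rw [← Real.sqrt_sq (norm_nonneg (Υ x t))]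
      exact Real.sqrt_le_sqrt hsq
    calc ‖Υ x t‖ ≤ Real.sqrt (S * ‖t‖ ^ 2) := h4
      _ = Real.sqrt S * ‖t‖ := by rw [Real.sqrt_mul hS, Real.sqrt_sq (norm_nonneg t)]
  have hΦnorm : ∀ y, opNorm (Φ y) ≤ Real.sqrt S := by
    intro y
    show ‖LinearMap.toContinuousLinearMap (Φ y)‖ ≤ Real.sqrt S
    refine ContinuousLinearMap.opNorm_le_bound _ (Real.sqrt_nonneg _) fun z => ?_
    rw [LinearMap.coe_toContinuousLinearMap']
    have hsq : ‖Φ y z‖ ^ 2 ≤ S * ‖z‖ ^ 2 := by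
      rw [PiLp.norm_sq_eq_of_L2]
      rw [Finset.sum_congr rfl fun (j : Fin k) _ =>
        congrArg (fun r : X₂ => ‖r‖ ^ 2) (hΦapp y z j)]
      rw [Equiv.sum_comp Eqv.symm (fun p => ‖ΦC y p z‖ ^ 2)]
      have h2 : ∀ p : D₁ × D₂ × Fin (Module.finrank ℂ Z₂),
          ‖ΦC y p z‖ ^ 2 ≤ (s p.1 p.2.1 p.2.2 / opNorm (Δ p.1 p.2.1)) * ‖z‖ ^ 2 := by
        rintro ⟨x', y', i⟩
        by_cases hyy : y' = y
        · subst hyy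
          simp only [hΦC, if_pos rfl, LinearMap.smul_apply, rankOne_apply]
          rw [norm_smul, norm_smul]
          have hc' : ‖((c x' y' i : ℝ) : ℂ)‖ = c x' y' i := by
            rw [Complex.norm_real, Real.norm_eq_abs, abs_of_nonneg (hc0 x' y' i)]
          rw [hc']
          have hab : ‖⟪v x' y' i, z⟫_ℂ‖ * ‖u x' y'‖ ≤ ‖z‖ := by
            calc ‖⟪v x' y' i, z⟫_ℂ‖ * ‖u x' y'‖ ≤ (‖v x' y' i‖ * ‖z‖) * 1 := by
                  refine mul_le_mul (norm_inner_le_norm _ _) (hu x' y') (norm_nonneg _) ?_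
                  exact mul_nonneg (norm_nonneg _) (norm_nonneg _)
              _ ≤ (1 * ‖z‖) * 1 := by
                  have := hv1 x' y' i
                  nlinarith [norm_nonneg z]
              _ = ‖z‖ := by ring
          calc (c x' y' i * (‖⟪v x' y' i, z⟫_ℂ‖ * ‖u x' y'‖)) ^ 2
              = c x' y' i ^ 2 * (‖⟪v x' y' i, z⟫_ℂ‖ * ‖u x' y'‖) ^ 2 := by ring
            _ ≤ c x' y' i ^ 2 * ‖z‖ ^ 2 := by
                refine mul_le_mul_of_nonneg_left ?_ (sq_nonneg _)
                exact pow_le_pow_left₀ (mul_nonneg (norm_nonneg _) (norm_nonneg _)) hab 2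
            _ = s x' y' i / opNorm (Δ x' y') * ‖z‖ ^ 2 := by rw [hcsq]
        · simp only [hΦC, if_neg hyy, LinearMap.zero_apply, norm_zero]
          have : (0:ℝ) ^ 2 = 0 := by norm_num
          rw [this]
          exact mul_nonneg (div_nonneg (hs0 _ _ _) (hd0 _ _)) (sq_nonneg _)
      refine le_trans (Finset.sum_le_sum fun p _ => h2 p) ?_
      rw [← Finset.sum_mul, hsumS]
    have h4 : ‖Φ y z‖ ≤ Real.sqrt (S * ‖z‖ ^ 2) := by
      rw [← Real.sqrt_sq (norm_nonneg (Φ y z))]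
      exact Real.sqrt_le_sqrt hsq
    calc ‖Φ y z‖ ≤ Real.sqrt (S * ‖z‖ ^ 2) := h4
      _ = Real.sqrt S * ‖z‖ := by rw [Real.sqrt_mul hS, Real.sqrt_sq (norm_nonneg z)]
  have hle : relGamma2 A Δ ≤ ENNReal.ofReal S := by
    refine le_trans (iInf_le_of_le k (iInf_le_of_le Υ (iInf_le_of_le Φ
      (iInf_le_of_le hfact le_rfl)))) ?_
    refine sup_le (iSup_le fun x => ?_) (iSup_le fun y => ?_)
    · refine ENNReal.ofReal_le_ofReal ?_
      calc opNorm (Υ x) ^ 2 ≤ Real.sqrt S ^ 2 :=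
            pow_le_pow_left₀ (norm_nonneg _) (hΥnorm x) 2
        _ = S := Real.sq_sqrt hS
    · refine ENNReal.ofReal_le_ofReal ?_
      calc opNorm (Φ y) ^ 2 ≤ Real.sqrt S ^ 2 :=
            pow_le_pow_left₀ (norm_nonneg _) (hΦnorm y) 2
        _ = S := Real.sq_sqrt hS
  exact ⟨ne_top_of_le_ne_top ENNReal.ofReal_ne_top hle, hle⟩

end
end

section
/- Composition property of the relative γ₂-norm: let D₁, D₂ be finite sets, X₁, X₂, Y₁, Y₂, Z₁, Z₂ finite-dimensional complex inner product spaces, and A = (A_{xy} : Z₂ → Z₁), B = (B_{xy} : Y₂ → Y₁), Δ = (Δ_{xy} : X₂ → X₁) families of linear maps indexed by x ∈ D₁, y ∈ D₂. If γ₂(A|B) < +∞ and γ₂(B|Δ) < +∞, then γ₂(A|Δ) ≤ γ₂(A|B) · γ₂(B|Δ). -/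
noncomputable section

open scoped ENNReal ComplexOrder

/-! ### Auxiliary lemmas -/

section Aux

set_option linter.unusedSectionVars false

variable {ι : Type*} [Fintype ι]

lemma piBlock_apply {X₁ X₂ : Type*}
    [NormedAddCommGroup X₁] [InnerProductSpace ℂ X₁]
    [NormedAddCommGroup X₂] [InnerProductSpace ℂ X₂]
    (Δ : ι → (X₂ →ₗ[ℂ] X₁)) (v : PiLp 2 (fun _ : ι => X₂)) (i : ι) :
    piBlock Δ v i = Δ i (v i) := rfl

lemma piBlock_comp {X₁ X₂ X₃ : Type*}
    [NormedAddCommGroup X₁] [InnerProductSpace ℂ X₁]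
    [NormedAddCommGroup X₂] [InnerProductSpace ℂ X₂]
    [NormedAddCommGroup X₃] [InnerProductSpace ℂ X₃]
    (f : ι → (X₂ →ₗ[ℂ] X₁)) (g : ι → (X₃ →ₗ[ℂ] X₂)) :
    piBlock (fun i => f i ∘ₗ g i) = piBlock f ∘ₗ piBlock g := rfl

lemma piBlock_adjoint {X₁ X₂ : Type*}
    [NormedAddCommGroup X₁] [InnerProductSpace ℂ X₁] [FiniteDimensional ℂ X₁]
    [NormedAddCommGroup X₂] [InnerProductSpace ℂ X₂] [FiniteDimensional ℂ X₂]
    (f : ι → (X₂ →ₗ[ℂ] X₁)) :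
    LinearMap.adjoint (piBlock f) = piBlock (fun i => LinearMap.adjoint (f i)) := by
  symm
  rw [LinearMap.eq_adjoint_iff]
  intro x y
  simp [PiLp.inner_apply, piBlock_apply, LinearMap.adjoint_inner_left]

variable {E F G : Type*}
    [NormedAddCommGroup E] [InnerProductSpace ℂ E] [FiniteDimensional ℂ E]
    [NormedAddCommGroup F] [InnerProductSpace ℂ F] [FiniteDimensional ℂ F]
    [NormedAddCommGroup G] [InnerProductSpace ℂ G] [FiniteDimensional ℂ G]

lemma opNorm_nonneg (f : E →ₗ[ℂ] F) : 0 ≤ opNorm f := norm_nonneg _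

lemma opNorm_apply_le (f : E →ₗ[ℂ] F) (v : E) : ‖f v‖ ≤ opNorm f * ‖v‖ :=
  (LinearMap.toContinuousLinearMap f).le_opNorm v

lemma opNorm_le_bound (f : E →ₗ[ℂ] F) {M : ℝ} (hM : 0 ≤ M)
    (h : ∀ v, ‖f v‖ ≤ M * ‖v‖) : opNorm f ≤ M :=
  ContinuousLinearMap.opNorm_le_bound _ hM h

lemma opNorm_comp_le (f : F →ₗ[ℂ] G) (g : E →ₗ[ℂ] F) :
    opNorm (f ∘ₗ g) ≤ opNorm f * opNorm g := by
  apply opNorm_le_bound _ (mul_nonneg (opNorm_nonneg f) (opNorm_nonneg g))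
  intro v
  calc ‖(f ∘ₗ g) v‖ = ‖f (g v)‖ := rfl
    _ ≤ opNorm f * ‖g v‖ := opNorm_apply_le f _
    _ ≤ opNorm f * (opNorm g * ‖v‖) :=
        mul_le_mul_of_nonneg_left (opNorm_apply_le g v) (opNorm_nonneg f)
    _ = opNorm f * opNorm g * ‖v‖ := by ring

lemma opNorm_piBlock (f : E →ₗ[ℂ] F) :
    opNorm (piBlock (fun _ : ι => f)) ≤ opNorm f := by
  apply opNorm_le_bound _ (opNorm_nonneg f)
  intro v
  rw [PiLp.norm_eq_of_L2, PiLp.norm_eq_of_L2]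
  rw [← Real.sqrt_sq (opNorm_nonneg f), ← Real.sqrt_mul (sq_nonneg _)]
  apply Real.sqrt_le_sqrt
  rw [Finset.mul_sum]
  apply Finset.sum_le_sum
  intro i _
  have h1 : ‖(piBlock (fun _ : ι => f)) v i‖ = ‖f (v i)‖ := rfl
  rw [h1]
  calc ‖f (v i)‖ ^ 2 ≤ (opNorm f * ‖v i‖) ^ 2 := by
        apply sq_le_sq' _ (opNorm_apply_le f _)
        linarith [norm_nonneg (f (v i)),
          mul_nonneg (opNorm_nonneg f) (norm_nonneg (v i))]
    _ = opNorm f ^ 2 * ‖v i‖ ^ 2 := by ring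

lemma opNorm_equiv_comp (e : F ≃ₗᵢ[ℂ] G) (g : E →ₗ[ℂ] F) :
    opNorm (e.toLinearEquiv.toLinearMap ∘ₗ g) ≤ opNorm g := by
  apply opNorm_le_bound _ (opNorm_nonneg g)
  intro v
  calc ‖(e.toLinearEquiv.toLinearMap ∘ₗ g) v‖ = ‖g v‖ := e.norm_map _
    _ ≤ opNorm g * ‖v‖ := opNorm_apply_le g v

lemma adjoint_isometryEquiv (e : E ≃ₗᵢ[ℂ] F) :
    LinearMap.adjoint (e.toLinearEquiv.toLinearMap : E →ₗ[ℂ] F) =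
      (e.symm.toLinearEquiv.toLinearMap : F →ₗ[ℂ] E) := by
  symm
  rw [LinearMap.eq_adjoint_iff]
  intro x y
  rw [← e.inner_map_map (e.symm.toLinearEquiv.toLinearMap x) y]
  simp

lemma equiv_cancel {G' : Type*} [AddCommGroup G'] [Module ℂ G']
    (e : E ≃ₗᵢ[ℂ] F) (g : G' →ₗ[ℂ] F) :
    e.toLinearEquiv.toLinearMap ∘ₗ (e.symm.toLinearEquiv.toLinearMap ∘ₗ g) = g := by
  apply LinearMap.ext
  intro z
  simp

def kmEquiv (k m : ℕ) : Fin (k * m) ≃ (Σ _ : Fin k, Fin m) :=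
  finProdFinEquiv.symm.trans (Equiv.sigmaEquivProd (Fin k) (Fin m)).symm

noncomputable def nest (k m : ℕ) (X : Type*) [NormedAddCommGroup X]
    [InnerProductSpace ℂ X] :
    PiLp 2 (fun _ : Fin (k * m) => X) ≃ₗᵢ[ℂ]
      PiLp 2 (fun _ : Fin k => PiLp 2 (fun _ : Fin m => X)) :=
  (LinearIsometryEquiv.piLpCongrLeft 2 ℂ X (kmEquiv k m)).trans
    (LinearIsometryEquiv.piLpCurry ℂ 2 (fun (_ : Fin k) (_ : Fin m) => X))

lemma nest_piBlock {X₁ X₂ : Type*}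
    [NormedAddCommGroup X₁] [InnerProductSpace ℂ X₁]
    [NormedAddCommGroup X₂] [InnerProductSpace ℂ X₂]
    (k m : ℕ) (Δ : X₂ →ₗ[ℂ] X₁) :
    piBlock (fun _ : Fin (k * m) => Δ) =
      (nest k m X₁).symm.toLinearEquiv.toLinearMap ∘ₗ
        piBlock (fun _ : Fin k => piBlock (fun _ : Fin m => Δ)) ∘ₗ
          (nest k m X₂).toLinearEquiv.toLinearMap := by
  apply LinearMap.ext
  intro v
  apply PiLp.ext
  intro i
  show Δ (v i) = _
  have h1 : ((nest k m X₁).symm.toLinearEquiv.toLinearMap ∘ₗ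
        piBlock (fun _ : Fin k => piBlock (fun _ : Fin m => Δ)) ∘ₗ
          (nest k m X₂).toLinearEquiv.toLinearMap) v i
      = (nest k m X₁).symm ((piBlock (fun _ : Fin k => piBlock (fun _ : Fin m => Δ)))
          (nest k m X₂ v)) i := rfl
  rw [h1]
  have h2 : ∀ (w : PiLp 2 (fun _ : Fin k => PiLp 2 (fun _ : Fin m => X₁))),
      (nest k m X₁).symm w i = w (kmEquiv k m i).1 (kmEquiv k m i).2 := by
    intro w
    simp [nest, LinearIsometryEquiv.piLpCongrLeft_apply, Equiv.piCongrLeft', Sigma.uncurry]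
  rw [h2]
  have h3 : (piBlock (fun _ : Fin k => piBlock (fun _ : Fin m => Δ)))
      ((nest k m X₂) v) (kmEquiv k m i).1 (kmEquiv k m i).2
      = Δ (((nest k m X₂) v) (kmEquiv k m i).1 (kmEquiv k m i).2) := rfl
  rw [h3]
  congr 1
  have h4 : ((nest k m X₂) v) (kmEquiv k m i).1 (kmEquiv k m i).2
      = v ((kmEquiv k m).symm ⟨(kmEquiv k m i).1, (kmEquiv k m i).2⟩) := rfl
  rw [h4, Sigma.eta, Equiv.symm_apply_apply]

end Aux

section Key

set_option linter.unusedSectionVars false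
set_option maxHeartbeats 1000000

variable {D₁ D₂ : Type} [Fintype D₁] [Fintype D₂]
    {X₁ X₂ Y₁ Y₂ Z₁ Z₂ : Type}
    [NormedAddCommGroup X₁] [InnerProductSpace ℂ X₁] [FiniteDimensional ℂ X₁]
    [NormedAddCommGroup X₂] [InnerProductSpace ℂ X₂] [FiniteDimensional ℂ X₂]
    [NormedAddCommGroup Z₁] [InnerProductSpace ℂ Z₁] [FiniteDimensional ℂ Z₁]
    [NormedAddCommGroup Z₂] [InnerProductSpace ℂ Z₂] [FiniteDimensional ℂ Z₂]
    [NormedAddCommGroup Y₁] [InnerProductSpace ℂ Y₁] [FiniteDimensional ℂ Y₁]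
    [NormedAddCommGroup Y₂] [InnerProductSpace ℂ Y₂] [FiniteDimensional ℂ Y₂]

lemma relGamma2_key (A : D₁ → D₂ → (Z₂ →ₗ[ℂ] Z₁)) (B : D₁ → D₂ → (Y₂ →ₗ[ℂ] Y₁))
    (Δ : D₁ → D₂ → (X₂ →ₗ[ℂ] X₁))
    (k : ℕ) (Υ : D₁ → (Z₁ →ₗ[ℂ] PiLp 2 (fun _ : Fin k => Y₁)))
    (Φ : D₂ → (Z₂ →ₗ[ℂ] PiLp 2 (fun _ : Fin k => Y₂)))
    (h : ∀ x y, A x y =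
      LinearMap.adjoint (Υ x) ∘ₗ piBlock (fun _ : Fin k => B x y) ∘ₗ Φ y)
    (m : ℕ) (Υ' : D₁ → (Y₁ →ₗ[ℂ] PiLp 2 (fun _ : Fin m => X₁)))
    (Φ' : D₂ → (Y₂ →ₗ[ℂ] PiLp 2 (fun _ : Fin m => X₂)))
    (h' : ∀ x y, B x y =
      LinearMap.adjoint (Υ' x) ∘ₗ piBlock (fun _ : Fin m => Δ x y) ∘ₗ Φ' y) :
    relGamma2 A Δ ≤
      (((⨆ x, ENNReal.ofReal (opNorm (Υ x) ^ 2)) ⊔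
          (⨆ y, ENNReal.ofReal (opNorm (Φ y) ^ 2))) : ℝ≥0∞) *
      (((⨆ x, ENNReal.ofReal (opNorm (Υ' x) ^ 2)) ⊔
          (⨆ y, ENNReal.ofReal (opNorm (Φ' y) ^ 2))) : ℝ≥0∞) := by
  set Υn : D₁ → (Z₁ →ₗ[ℂ] PiLp 2 (fun _ : Fin (k * m) => X₁)) := fun x =>
    (nest k m X₁).symm.toLinearEquiv.toLinearMap ∘ₗ
      (piBlock (fun _ : Fin k => Υ' x) ∘ₗ Υ x) with hΥn
  set Φn : D₂ → (Z₂ →ₗ[ℂ] PiLp 2 (fun _ : Fin (k * m) => X₂)) := fun y =>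
    (nest k m X₂).symm.toLinearEquiv.toLinearMap ∘ₗ
      (piBlock (fun _ : Fin k => Φ' y) ∘ₗ Φ y) with hΦn
  have hfact : ∀ x y, A x y =
      LinearMap.adjoint (Υn x) ∘ₗ piBlock (fun _ : Fin (k * m) => Δ x y) ∘ₗ Φn y := by
    intro x y
    rw [nest_piBlock k m (Δ x y), hΥn, hΦn]
    simp only [LinearMap.adjoint_comp, piBlock_adjoint, adjoint_isometryEquiv,
      LinearIsometryEquiv.symm_symm]
    simp only [LinearMap.comp_assoc]
    rw [equiv_cancel, equiv_cancel]
    rw [h x y]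
    simp only [h' x y]
    rfl
  have hnΥ : ∀ x, opNorm (Υn x) ≤ opNorm (Υ' x) * opNorm (Υ x) := fun x =>
    le_trans (opNorm_equiv_comp _ _) (le_trans (opNorm_comp_le _ _)
      (mul_le_mul_of_nonneg_right (opNorm_piBlock _) (opNorm_nonneg _)))
  have hnΦ : ∀ y, opNorm (Φn y) ≤ opNorm (Φ' y) * opNorm (Φ y) := fun y =>
    le_trans (opNorm_equiv_comp _ _) (le_trans (opNorm_comp_le _ _)
      (mul_le_mul_of_nonneg_right (opNorm_piBlock _) (opNorm_nonneg _)))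
  calc relGamma2 A Δ
      ≤ (⨆ x, ENNReal.ofReal (opNorm (Υn x) ^ 2)) ⊔
          (⨆ y, ENNReal.ofReal (opNorm (Φn y) ^ 2)) := by
        unfold relGamma2
        exact iInf_le_of_le (k * m) (iInf_le_of_le Υn (iInf_le_of_le Φn
          (iInf_le_of_le hfact le_rfl)))
    _ ≤ _ := by
        apply sup_le
        · apply iSup_le
          intro x
          calc ENNReal.ofReal (opNorm (Υn x) ^ 2)
              ≤ ENNReal.ofReal ((opNorm (Υ' x) * opNorm (Υ x)) ^ 2) :=
                ENNReal.ofReal_le_ofReal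
                  (pow_le_pow_left₀ (opNorm_nonneg _) (hnΥ x) 2)
            _ = ENNReal.ofReal (opNorm (Υ x) ^ 2) *
                  ENNReal.ofReal (opNorm (Υ' x) ^ 2) := by
                rw [mul_pow, mul_comm, ← ENNReal.ofReal_mul (sq_nonneg _)]
            _ ≤ _ := mul_le_mul' (le_trans (le_iSup (fun x => ENNReal.ofReal (opNorm (Υ x) ^ 2)) x) le_sup_left)
                  (le_trans (le_iSup (fun x => ENNReal.ofReal (opNorm (Υ' x) ^ 2)) x)
                    le_sup_left)
        · apply iSup_le
          intro y
          calc ENNReal.ofReal (opNorm (Φn y) ^ 2)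
              ≤ ENNReal.ofReal ((opNorm (Φ' y) * opNorm (Φ y)) ^ 2) :=
                ENNReal.ofReal_le_ofReal
                  (pow_le_pow_left₀ (opNorm_nonneg _) (hnΦ y) 2)
            _ = ENNReal.ofReal (opNorm (Φ y) ^ 2) *
                  ENNReal.ofReal (opNorm (Φ' y) ^ 2) := by
                rw [mul_pow, mul_comm, ← ENNReal.ofReal_mul (sq_nonneg _)]
            _ ≤ _ := mul_le_mul' (le_trans (le_iSup (fun y => ENNReal.ofReal (opNorm (Φ y) ^ 2)) y) le_sup_right)
                  (le_trans (le_iSup (fun y => ENNReal.ofReal (opNorm (Φ' y) ^ 2)) y)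
                    le_sup_right)

end Key

set_option maxHeartbeats 1000000 in
/-- Composition property of the relative `γ₂`-norm:
`γ₂(A|Δ) ≤ γ₂(A|B) · γ₂(B|Δ)` whenever `γ₂(A|B)` and `γ₂(B|Δ)` are finite. -/
theorem statement6 {D₁ D₂ : Type} [Fintype D₁] [Fintype D₂]
    {X₁ X₂ Y₁ Y₂ Z₁ Z₂ : Type}
    [NormedAddCommGroup X₁] [InnerProductSpace ℂ X₁] [FiniteDimensional ℂ X₁]
    [NormedAddCommGroup X₂] [InnerProductSpace ℂ X₂] [FiniteDimensional ℂ X₂]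
    [NormedAddCommGroup Z₁] [InnerProductSpace ℂ Z₁] [FiniteDimensional ℂ Z₁]
    [NormedAddCommGroup Z₂] [InnerProductSpace ℂ Z₂] [FiniteDimensional ℂ Z₂]
    [NormedAddCommGroup Y₁] [InnerProductSpace ℂ Y₁] [FiniteDimensional ℂ Y₁]
    [NormedAddCommGroup Y₂] [InnerProductSpace ℂ Y₂] [FiniteDimensional ℂ Y₂]
    (A : D₁ → D₂ → (Z₂ →ₗ[ℂ] Z₁)) (B : D₁ → D₂ → (Y₂ →ₗ[ℂ] Y₁))
    (Δ : D₁ → D₂ → (X₂ →ₗ[ℂ] X₁))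
    (hAB : relGamma2 A B ≠ ⊤) (hBΔ : relGamma2 B Δ ≠ ⊤) :
    relGamma2 A Δ ≤ relGamma2 A B * relGamma2 B Δ := by
  apply ENNReal.le_of_forall_pos_le_add
  intro ε hε _
  have habt : relGamma2 A B + relGamma2 B Δ + 1 ≠ ⊤ :=
    ENNReal.add_ne_top.mpr ⟨ENNReal.add_ne_top.mpr ⟨hAB, hBΔ⟩, ENNReal.one_ne_top⟩
  have habne0 : relGamma2 A B + relGamma2 B Δ + 1 ≠ 0 :=
    (lt_of_lt_of_le zero_lt_one le_add_self).ne'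
  have hεne : (ε : ℝ≥0∞) ≠ 0 := ENNReal.coe_ne_zero.mpr hε.ne'
  set δ : ℝ≥0∞ := min 1 ((ε : ℝ≥0∞) / (relGamma2 A B + relGamma2 B Δ + 1)) with hδdef
  have hδ0 : δ ≠ 0 := (lt_min zero_lt_one (ENNReal.div_pos hεne habt)).ne'
  have h1 : relGamma2 A B < relGamma2 A B + δ := ENNReal.lt_add_right hAB hδ0
  have h2 : relGamma2 B Δ < relGamma2 B Δ + δ := ENNReal.lt_add_right hBΔ hδ0
  conv at h1 => lhs; rw [relGamma2]
  conv at h2 => lhs; rw [relGamma2]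
  simp only [iInf_lt_iff] at h1 h2
  obtain ⟨k, Υ, Φ, hfac, hV⟩ := h1
  obtain ⟨m, Υ', Φ', hfac', hV'⟩ := h2
  have hmain := relGamma2_key A B Δ k Υ Φ hfac m Υ' Φ' hfac'
  have h3 : (((⨆ x, ENNReal.ofReal (opNorm (Υ x) ^ 2)) ⊔
        (⨆ y, ENNReal.ofReal (opNorm (Φ y) ^ 2))) : ℝ≥0∞) *
      (((⨆ x, ENNReal.ofReal (opNorm (Υ' x) ^ 2)) ⊔
        (⨆ y, ENNReal.ofReal (opNorm (Φ' y) ^ 2))) : ℝ≥0∞) ≤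
      (relGamma2 A B + δ) * (relGamma2 B Δ + δ) := mul_le_mul' hV.le hV'.le
  have h4 : (relGamma2 A B + δ) * (relGamma2 B Δ + δ) ≤
      relGamma2 A B * relGamma2 B Δ + ε := by
    have expand : (relGamma2 A B + δ) * (relGamma2 B Δ + δ) =
        relGamma2 A B * relGamma2 B Δ + δ * (relGamma2 A B + relGamma2 B Δ + δ) := by
      ring
    rw [expand]
    apply add_le_add le_rfl
    calc δ * (relGamma2 A B + relGamma2 B Δ + δ)
        ≤ ((ε : ℝ≥0∞) / (relGamma2 A B + relGamma2 B Δ + 1)) *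
            (relGamma2 A B + relGamma2 B Δ + 1) :=
          mul_le_mul' (min_le_right _ _) (add_le_add le_rfl (min_le_left _ _))
      _ = ε := ENNReal.div_mul_cancel habne0 habt
  exact le_trans hmain (le_trans h3 h4)

end
end

section
/- Direct sum property of the relative γ₂-norm: let D₁, D₂ be finite sets and A = (A_{xy} : Z₂ → Z₁), B = (B_{xy} : Z₂′ → Z₁′), Δ = (Δ_{xy} : X₂ → X₁), E = (E_{xy} : X₂′ → X₁′) families of linear maps between finite-dimensional complex inner product spaces, indexed by x ∈ D₁, y ∈ D₂. Then: (i) γ₂((A_{xy} ⊕ B_{xy})_{x,y} | (Δ_{xy} ⊕ E_{xy})_{x,y}) ≤ max{γ₂(A|Δ), γ₂(B|E)}, where A_{xy} ⊕ B_{xy} : Z₂ ⊕ Z₂′ → Z₁ ⊕ Z₁′ and Δ_{xy} ⊕ E_{xy} : X₂ ⊕ X₂′ → X₁ ⊕ X₁′ are the block-diagonal maps; (ii) γ₂((A_{xy} ⊕ B_{xy})_{x,y} | Δ) = max{γ₂(A|Δ), γ₂(B|Δ)}, where now B_{xy} : Z₂′ → Z₁′ and the common family Δ is used for both summands. -/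
noncomputable section

open scoped ENNReal ComplexOrder

/-- Block-diagonal direct sum `f ⊕ g` on the `ℓ²`-direct sum of two spaces. -/
noncomputable def dsum {E E' F F' : Type*}
    [NormedAddCommGroup E] [InnerProductSpace ℂ E]
    [NormedAddCommGroup E'] [InnerProductSpace ℂ E']
    [NormedAddCommGroup F] [InnerProductSpace ℂ F]
    [NormedAddCommGroup F'] [InnerProductSpace ℂ F']
    (f : E →ₗ[ℂ] F) (g : E' →ₗ[ℂ] F') :
    WithLp 2 (E × E') →ₗ[ℂ] WithLp 2 (F × F') :=
  (WithLp.linearEquiv 2 ℂ (F × F')).symm.toLinearMap ∘ₗ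
    (LinearMap.prodMap f g) ∘ₗ (WithLp.linearEquiv 2 ℂ (E × E')).toLinearMap

namespace S7

variable {E E' F G X X' Z Z' : Type*}
  [NormedAddCommGroup E] [InnerProductSpace ℂ E]
  [NormedAddCommGroup E'] [InnerProductSpace ℂ E']
  [NormedAddCommGroup F] [InnerProductSpace ℂ F]
  [NormedAddCommGroup X] [InnerProductSpace ℂ X]
  [NormedAddCommGroup X'] [InnerProductSpace ℂ X']
  [NormedAddCommGroup Z] [InnerProductSpace ℂ Z]
  [NormedAddCommGroup Z'] [InnerProductSpace ℂ Z']

section opNorm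
variable [FiniteDimensional ℂ E]

lemma opNorm_nonneg (f : E →ₗ[ℂ] F) : 0 ≤ opNorm f := norm_nonneg _

lemma le_opNorm (f : E →ₗ[ℂ] F) (v : E) : ‖f v‖ ≤ opNorm f * ‖v‖ := by
  simpa [opNorm, LinearMap.coe_toContinuousLinearMap'] using
    (LinearMap.toContinuousLinearMap f).le_opNorm v

lemma opNorm_le {f : E →ₗ[ℂ] F} {C : ℝ} (hC : 0 ≤ C) (h : ∀ v, ‖f v‖ ≤ C * ‖v‖) :
    opNorm f ≤ C :=
  ContinuousLinearMap.opNorm_le_bound _ hC (by simpa [LinearMap.coe_toContinuousLinearMap'] using h)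

end opNorm

lemma norm_le_of_sq_le_sq {a b : ℝ} (ha : 0 ≤ a) (hb : 0 ≤ b) (h : a ^ 2 ≤ b ^ 2) : a ≤ b := by
  nlinarith

/-- inclusion of the first factor into the `ℓ²` product. -/
noncomputable def inlL (E E' : Type*) [NormedAddCommGroup E] [InnerProductSpace ℂ E]
    [NormedAddCommGroup E'] [InnerProductSpace ℂ E'] : E →ₗ[ℂ] WithLp 2 (E × E') :=
  (WithLp.linearEquiv 2 ℂ (E × E')).symm.toLinearMap ∘ₗ LinearMap.inl ℂ E E'

noncomputable def inrL (E E' : Type*) [NormedAddCommGroup E] [InnerProductSpace ℂ E]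
    [NormedAddCommGroup E'] [InnerProductSpace ℂ E'] : E' →ₗ[ℂ] WithLp 2 (E × E') :=
  (WithLp.linearEquiv 2 ℂ (E × E')).symm.toLinearMap ∘ₗ LinearMap.inr ℂ E E'

@[simp] lemma inlL_fst (v : E) : (inlL E E' v).fst = v := rfl
@[simp] lemma inlL_snd (v : E) : (inlL E E' v).snd = 0 := rfl
@[simp] lemma inrL_fst (v : E') : (inrL E E' v).fst = 0 := rfl
@[simp] lemma inrL_snd (v : E') : (inrL E E' v).snd = v := rfl

@[simp] lemma norm_inlL (v : E) : ‖inlL E E' v‖ = ‖v‖ := by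
  have h := WithLp.prod_norm_sq_eq_of_L2 (inlL E E' v)
  simp only [inlL_fst, inlL_snd, norm_zero] at h
  nlinarith [norm_nonneg (inlL E E' v), norm_nonneg v]

@[simp] lemma norm_inrL (v : E') : ‖inrL E E' v‖ = ‖v‖ := by
  have h := WithLp.prod_norm_sq_eq_of_L2 (inrL E E' v)
  simp only [inrL_fst, inrL_snd, norm_zero] at h
  nlinarith [norm_nonneg (inrL E E' v), norm_nonneg v]

@[simp] lemma dsum_fst (f : E →ₗ[ℂ] F) (g : E' →ₗ[ℂ] X) (p : WithLp 2 (E × E')) :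
    (dsum f g p).fst = f p.fst := rfl
@[simp] lemma dsum_snd (f : E →ₗ[ℂ] F) (g : E' →ₗ[ℂ] X) (p : WithLp 2 (E × E')) :
    (dsum f g p).snd = g p.snd := rfl

@[simp] lemma piBlock_apply {ι : Type*} [Fintype ι] (Δ : ι → (X →ₗ[ℂ] X'))
    (v : PiLp 2 (fun _ : ι => X)) (i : ι) : piBlock Δ v i = Δ i (v i) := rfl


noncomputable def fstL (E E' : Type*) [NormedAddCommGroup E] [InnerProductSpace ℂ E]
    [NormedAddCommGroup E'] [InnerProductSpace ℂ E'] : WithLp 2 (E × E') →ₗ[ℂ] E :=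
  (LinearMap.fst ℂ E E') ∘ₗ (WithLp.linearEquiv 2 ℂ (E × E')).toLinearMap

noncomputable def sndL (E E' : Type*) [NormedAddCommGroup E] [InnerProductSpace ℂ E]
    [NormedAddCommGroup E'] [InnerProductSpace ℂ E'] : WithLp 2 (E × E') →ₗ[ℂ] E' :=
  (LinearMap.snd ℂ E E') ∘ₗ (WithLp.linearEquiv 2 ℂ (E × E')).toLinearMap

@[simp] lemma fstL_apply (p : WithLp 2 (E × E')) : fstL E E' p = p.fst := rfl
@[simp] lemma sndL_apply (p : WithLp 2 (E × E')) : sndL E E' p = p.snd := rfl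

/-- "append" of two maps into `ℓ²` powers. -/
noncomputable def appendMap {k k' : ℕ}
    (f : Z →ₗ[ℂ] PiLp 2 (fun _ : Fin k => X)) (g : Z' →ₗ[ℂ] PiLp 2 (fun _ : Fin k' => X)) :
    WithLp 2 (Z × Z') →ₗ[ℂ] PiLp 2 (fun _ : Fin (k + k') => X) :=
  (WithLp.linearEquiv 2 ℂ (∀ _ : Fin (k + k'), X)).symm.toLinearMap ∘ₗ
    LinearMap.pi (fun i : Fin (k + k') =>
      Fin.addCases (motive := fun _ => WithLp 2 (Z × Z') →ₗ[ℂ] X)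
        (fun i₀ => (LinearMap.proj i₀) ∘ₗ
          (WithLp.linearEquiv 2 ℂ (∀ _ : Fin k, X)).toLinearMap ∘ₗ f ∘ₗ fstL Z Z')
        (fun j₀ => (LinearMap.proj j₀) ∘ₗ
          (WithLp.linearEquiv 2 ℂ (∀ _ : Fin k', X)).toLinearMap ∘ₗ g ∘ₗ sndL Z Z') i)

@[simp] lemma appendMap_apply_left {k k' : ℕ}
    (f : Z →ₗ[ℂ] PiLp 2 (fun _ : Fin k => X)) (g : Z' →ₗ[ℂ] PiLp 2 (fun _ : Fin k' => X))
    (p : WithLp 2 (Z × Z')) (i : Fin k) :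
    appendMap f g p (Fin.castAdd k' i) = f p.fst i := by
  simp [appendMap, Fin.addCases_left]

@[simp] lemma appendMap_apply_right {k k' : ℕ}
    (f : Z →ₗ[ℂ] PiLp 2 (fun _ : Fin k => X)) (g : Z' →ₗ[ℂ] PiLp 2 (fun _ : Fin k' => X))
    (p : WithLp 2 (Z × Z')) (j : Fin k') :
    appendMap f g p (Fin.natAdd k j) = g p.snd j := by
  simp [appendMap, Fin.addCases_right]

lemma appendMap_norm_sq {k k' : ℕ}
    (f : Z →ₗ[ℂ] PiLp 2 (fun _ : Fin k => X)) (g : Z' →ₗ[ℂ] PiLp 2 (fun _ : Fin k' => X))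
    (p : WithLp 2 (Z × Z')) :
    ‖appendMap f g p‖ ^ 2 = ‖f p.fst‖ ^ 2 + ‖g p.snd‖ ^ 2 := by
  rw [PiLp.norm_sq_eq_of_L2, PiLp.norm_sq_eq_of_L2, PiLp.norm_sq_eq_of_L2, Fin.sum_univ_add]
  simp


section bounds
variable [FiniteDimensional ℂ Z] [FiniteDimensional ℂ Z'] [FiniteDimensional ℂ E]

lemma opNorm_appendMap_le {k k' : ℕ}
    (f : Z →ₗ[ℂ] PiLp 2 (fun _ : Fin k => X)) (g : Z' →ₗ[ℂ] PiLp 2 (fun _ : Fin k' => X)) :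
    opNorm (appendMap f g) ≤ max (opNorm f) (opNorm g) := by
  have hM : 0 ≤ max (opNorm f) (opNorm g) := le_max_of_le_left (opNorm_nonneg f)
  refine opNorm_le hM fun v => ?_
  refine norm_le_of_sq_le_sq (norm_nonneg _) (by positivity) ?_
  rw [mul_pow, appendMap_norm_sq, WithLp.prod_norm_sq_eq_of_L2]
  have h1 := le_opNorm f v.fst
  have h2 := le_opNorm g v.snd
  have e1 : ‖f v.fst‖ ^ 2 ≤ (opNorm f) ^ 2 * ‖v.fst‖ ^ 2 := by
    nlinarith [norm_nonneg (f v.fst), norm_nonneg v.fst, opNorm_nonneg f]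
  have e2 : ‖g v.snd‖ ^ 2 ≤ (opNorm g) ^ 2 * ‖v.snd‖ ^ 2 := by
    nlinarith [norm_nonneg (g v.snd), norm_nonneg v.snd, opNorm_nonneg g]
  have m1 : (opNorm f) ^ 2 ≤ (max (opNorm f) (opNorm g)) ^ 2 := by
    have := le_max_left (opNorm f) (opNorm g)
    nlinarith [opNorm_nonneg f]
  have m2 : (opNorm g) ^ 2 ≤ (max (opNorm f) (opNorm g)) ^ 2 := by
    have := le_max_right (opNorm f) (opNorm g)
    nlinarith [opNorm_nonneg g]
  nlinarith [sq_nonneg ‖v.fst‖, sq_nonneg ‖v.snd‖]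

lemma opNorm_comp_inlL_le [FiniteDimensional ℂ E'] [FiniteDimensional ℂ (WithLp 2 (E × E'))]
    (f : WithLp 2 (E × E') →ₗ[ℂ] F) :
    opNorm (f ∘ₗ inlL E E') ≤ opNorm f := by
  refine opNorm_le (opNorm_nonneg f) fun v => ?_
  simpa [norm_inlL] using le_opNorm f (inlL E E' v)

lemma opNorm_comp_inrL_le [FiniteDimensional ℂ E'] [FiniteDimensional ℂ (WithLp 2 (E × E'))]
    (f : WithLp 2 (E × E') →ₗ[ℂ] F) :
    opNorm (f ∘ₗ inrL E E') ≤ opNorm f := by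
  refine opNorm_le (opNorm_nonneg f) fun v => ?_
  simpa [norm_inrL] using le_opNorm f (inrL E E' v)

/-- componentwise inclusion preserves norms, so composing with it does not increase opNorm. -/
lemma opNorm_piIncl_comp_le {k : ℕ} [FiniteDimensional ℂ Z]
    (f : Z →ₗ[ℂ] PiLp 2 (fun _ : Fin k => X)) :
    opNorm (piBlock (fun _ : Fin k => inlL X X') ∘ₗ f) ≤ opNorm f := by
  refine opNorm_le (opNorm_nonneg f) fun v => ?_
  have : ‖piBlock (fun _ : Fin k => inlL X X') (f v)‖ = ‖f v‖ := by
    refine norm_le_of_sq_le_sq (norm_nonneg _) (norm_nonneg _) ?_ |>.antisymm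
      (norm_le_of_sq_le_sq (norm_nonneg _) (norm_nonneg _) ?_) <;>
    · rw [PiLp.norm_sq_eq_of_L2, PiLp.norm_sq_eq_of_L2]
      simp
  rw [LinearMap.comp_apply, this]
  exact le_opNorm f v

lemma opNorm_piIncr_comp_le {k : ℕ} [FiniteDimensional ℂ Z]
    (f : Z →ₗ[ℂ] PiLp 2 (fun _ : Fin k => X')) :
    opNorm (piBlock (fun _ : Fin k => inrL X X') ∘ₗ f) ≤ opNorm f := by
  refine opNorm_le (opNorm_nonneg f) fun v => ?_
  have : ‖piBlock (fun _ : Fin k => inrL X X') (f v)‖ = ‖f v‖ := by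
    refine norm_le_of_sq_le_sq (norm_nonneg _) (norm_nonneg _) ?_ |>.antisymm
      (norm_le_of_sq_le_sq (norm_nonneg _) (norm_nonneg _) ?_) <;>
    · rw [PiLp.norm_sq_eq_of_L2, PiLp.norm_sq_eq_of_L2]
      simp
  rw [LinearMap.comp_apply, this]
  exact le_opNorm f v

end bounds

lemma ofReal_sq_le_sup {a b c : ℝ} (ha : 0 ≤ a) (h : a ≤ max b c) :
    ENNReal.ofReal (a ^ 2) ≤ ENNReal.ofReal (b ^ 2) ⊔ ENNReal.ofReal (c ^ 2) := by
  rcases le_total b c with hbc | hbc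
  · exact le_sup_of_le_right (ENNReal.ofReal_le_ofReal
      (by rw [max_eq_right hbc] at h; nlinarith))
  · exact le_sup_of_le_left (ENNReal.ofReal_le_ofReal
      (by rw [max_eq_left hbc] at h; nlinarith))

lemma inner_factor {Z₁ Z₂ X₁ X₂ : Type*}
    [NormedAddCommGroup X₁] [InnerProductSpace ℂ X₁] [FiniteDimensional ℂ X₁]
    [NormedAddCommGroup X₂] [InnerProductSpace ℂ X₂]
    [NormedAddCommGroup Z₁] [InnerProductSpace ℂ Z₁] [FiniteDimensional ℂ Z₁]
    [NormedAddCommGroup Z₂] [InnerProductSpace ℂ Z₂]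
    {k : ℕ} {Axy : Z₂ →ₗ[ℂ] Z₁} {Δxy : X₂ →ₗ[ℂ] X₁}
    {Υx : Z₁ →ₗ[ℂ] PiLp 2 (fun _ : Fin k => X₁)}
    {Φy : Z₂ →ₗ[ℂ] PiLp 2 (fun _ : Fin k => X₂)}
    (h : Axy = LinearMap.adjoint Υx ∘ₗ piBlock (fun _ : Fin k => Δxy) ∘ₗ Φy)
    (u : Z₁) (w : Z₂) :
    (inner ℂ u (Axy w) : ℂ) = ∑ i, inner ℂ (Υx u i) (Δxy (Φy w i)) := by
  rw [h]
  simp only [LinearMap.comp_apply, LinearMap.adjoint_inner_right, PiLp.inner_apply,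
    piBlock_apply]

section main
variable {D₁ D₂ : Type} [Fintype D₁] [Fintype D₂]
    {X₁ X₂ X₁' X₂' Z₁ Z₂ Z₁' Z₂' : Type}
    [NormedAddCommGroup X₁] [InnerProductSpace ℂ X₁] [FiniteDimensional ℂ X₁]
    [NormedAddCommGroup X₂] [InnerProductSpace ℂ X₂] [FiniteDimensional ℂ X₂]
    [NormedAddCommGroup X₁'] [InnerProductSpace ℂ X₁'] [FiniteDimensional ℂ X₁']
    [NormedAddCommGroup X₂'] [InnerProductSpace ℂ X₂'] [FiniteDimensional ℂ X₂']
    [NormedAddCommGroup Z₁] [InnerProductSpace ℂ Z₁] [FiniteDimensional ℂ Z₁]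
    [NormedAddCommGroup Z₂] [InnerProductSpace ℂ Z₂] [FiniteDimensional ℂ Z₂]
    [NormedAddCommGroup Z₁'] [InnerProductSpace ℂ Z₁'] [FiniteDimensional ℂ Z₁']
    [NormedAddCommGroup Z₂'] [InnerProductSpace ℂ Z₂'] [FiniteDimensional ℂ Z₂']
    (A : D₁ → D₂ → (Z₂ →ₗ[ℂ] Z₁)) (B : D₁ → D₂ → (Z₂' →ₗ[ℂ] Z₁'))
    (Δ : D₁ → D₂ → (X₂ →ₗ[ℂ] X₁)) (E : D₁ → D₂ → (X₂' →ₗ[ℂ] X₁'))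

lemma ge_A : relGamma2 A Δ ≤ relGamma2 (fun x y => dsum (A x y) (B x y)) Δ := by
  simp only [relGamma2]
  refine le_iInf fun k => le_iInf fun Υ => le_iInf fun Φ => le_iInf fun h => ?_
  refine iInf_le_of_le k <| iInf_le_of_le (fun x => Υ x ∘ₗ inlL Z₁ Z₁') <|
    iInf_le_of_le (fun y => Φ y ∘ₗ inlL Z₂ Z₂') <| iInf_le_of_le ?_ ?_
  · intro x y
    refine LinearMap.ext fun w => ext_inner_left ℂ fun u => ?_
    simp only [LinearMap.comp_apply, LinearMap.adjoint_inner_right]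
    have := inner_factor (h x y) (inlL Z₁ Z₁' u) (inlL Z₂ Z₂' w)
    rw [WithLp.prod_inner_apply] at this
    simpa [PiLp.inner_apply] using this
  · refine sup_le_sup (iSup_mono fun x => ENNReal.ofReal_le_ofReal ?_)
      (iSup_mono fun y => ENNReal.ofReal_le_ofReal ?_)
    · have h1 := opNorm_comp_inlL_le (Υ x)
      have h0 := opNorm_nonneg (Υ x ∘ₗ inlL Z₁ Z₁')
      nlinarith [opNorm_nonneg (Υ x)]
    · have h1 := opNorm_comp_inlL_le (Φ y)
      have h0 := opNorm_nonneg (Φ y ∘ₗ inlL Z₂ Z₂')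
      nlinarith [opNorm_nonneg (Φ y)]

lemma ge_B : relGamma2 B Δ ≤ relGamma2 (fun x y => dsum (A x y) (B x y)) Δ := by
  simp only [relGamma2]
  refine le_iInf fun k => le_iInf fun Υ => le_iInf fun Φ => le_iInf fun h => ?_
  refine iInf_le_of_le k <| iInf_le_of_le (fun x => Υ x ∘ₗ inrL Z₁ Z₁') <|
    iInf_le_of_le (fun y => Φ y ∘ₗ inrL Z₂ Z₂') <| iInf_le_of_le ?_ ?_
  · intro x y
    refine LinearMap.ext fun w => ext_inner_left ℂ fun u => ?_
    simp only [LinearMap.comp_apply, LinearMap.adjoint_inner_right]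
    have := inner_factor (h x y) (inrL Z₁ Z₁' u) (inrL Z₂ Z₂' w)
    rw [WithLp.prod_inner_apply] at this
    simpa [PiLp.inner_apply] using this
  · refine sup_le_sup (iSup_mono fun x => ENNReal.ofReal_le_ofReal ?_)
      (iSup_mono fun y => ENNReal.ofReal_le_ofReal ?_)
    · have h1 := opNorm_comp_inrL_le (Υ x)
      have h0 := opNorm_nonneg (Υ x ∘ₗ inrL Z₁ Z₁')
      nlinarith [opNorm_nonneg (Υ x)]
    · have h1 := opNorm_comp_inrL_le (Φ y)
      have h0 := opNorm_nonneg (Φ y ∘ₗ inrL Z₂ Z₂')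
      nlinarith [opNorm_nonneg (Φ y)]

lemma le_part2 : relGamma2 (fun x y => dsum (A x y) (B x y)) Δ ≤
    relGamma2 A Δ ⊔ relGamma2 B Δ := by
  simp only [relGamma2]
  simp_rw [iInf_sup_eq, sup_iInf_eq]
  refine le_iInf fun k => le_iInf fun Υ => le_iInf fun Φ => le_iInf fun h =>
    le_iInf fun k' => le_iInf fun Υ' => le_iInf fun Φ' => le_iInf fun h' => ?_
  refine iInf_le_of_le (k + k') <| iInf_le_of_le (fun x => appendMap (Υ x) (Υ' x)) <|
    iInf_le_of_le (fun y => appendMap (Φ y) (Φ' y)) <| iInf_le_of_le ?_ ?_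
  · intro x y
    refine LinearMap.ext fun v => ext_inner_left ℂ fun u => ?_
    simp only [LinearMap.comp_apply, LinearMap.adjoint_inner_right]
    rw [WithLp.prod_inner_apply]
    simp only [← WithLp.fst.eq_1, ← WithLp.snd.eq_1, dsum_fst, dsum_snd]
    rw [inner_factor (h x y), inner_factor (h' x y), PiLp.inner_apply, Fin.sum_univ_add]
    simp
  · refine sup_le ?_ ?_
    · refine iSup_le fun x => ?_
      refine (ofReal_sq_le_sup (opNorm_nonneg _) (opNorm_appendMap_le (Υ x) (Υ' x))).trans ?_
      exact sup_le (le_sup_of_le_left (le_sup_of_le_left (le_iSup_of_le x le_rfl)))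
        (le_sup_of_le_right (le_sup_of_le_left (le_iSup_of_le x le_rfl)))
    · refine iSup_le fun y => ?_
      refine (ofReal_sq_le_sup (opNorm_nonneg _) (opNorm_appendMap_le (Φ y) (Φ' y))).trans ?_
      exact sup_le (le_sup_of_le_left (le_sup_of_le_right (le_iSup_of_le y le_rfl)))
        (le_sup_of_le_right (le_sup_of_le_right (le_iSup_of_le y le_rfl)))

lemma le_part1 : relGamma2 (fun x y => dsum (A x y) (B x y)) (fun x y => dsum (Δ x y) (E x y)) ≤
    relGamma2 A Δ ⊔ relGamma2 B E := by
  simp only [relGamma2]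
  simp_rw [iInf_sup_eq, sup_iInf_eq]
  refine le_iInf fun k => le_iInf fun Υ => le_iInf fun Φ => le_iInf fun h =>
    le_iInf fun k' => le_iInf fun Υ' => le_iInf fun Φ' => le_iInf fun h' => ?_
  refine iInf_le_of_le (k + k') <|
    iInf_le_of_le (fun x => appendMap (piBlock (fun _ : Fin k => inlL X₁ X₁') ∘ₗ Υ x)
      (piBlock (fun _ : Fin k' => inrL X₁ X₁') ∘ₗ Υ' x)) <|
    iInf_le_of_le (fun y => appendMap (piBlock (fun _ : Fin k => inlL X₂ X₂') ∘ₗ Φ y)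
      (piBlock (fun _ : Fin k' => inrL X₂ X₂') ∘ₗ Φ' y)) <| iInf_le_of_le ?_ ?_
  · intro x y
    refine LinearMap.ext fun v => ext_inner_left ℂ fun u => ?_
    simp only [LinearMap.comp_apply, LinearMap.adjoint_inner_right]
    rw [WithLp.prod_inner_apply]
    simp only [← WithLp.fst.eq_1, ← WithLp.snd.eq_1, dsum_fst, dsum_snd]
    rw [inner_factor (h x y), inner_factor (h' x y), PiLp.inner_apply, Fin.sum_univ_add]
    simp
  · refine sup_le ?_ ?_
    · refine iSup_le fun x => ?_
      have hb : opNorm (appendMap (piBlock (fun _ : Fin k => inlL X₁ X₁') ∘ₗ Υ x)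
          (piBlock (fun _ : Fin k' => inrL X₁ X₁') ∘ₗ Υ' x)) ≤
          max (opNorm (Υ x)) (opNorm (Υ' x)) :=
        (opNorm_appendMap_le _ _).trans
          (max_le_max (opNorm_piIncl_comp_le _) (opNorm_piIncr_comp_le _))
      refine (ofReal_sq_le_sup (opNorm_nonneg _) hb).trans ?_
      exact sup_le (le_sup_of_le_left (le_sup_of_le_left (le_iSup_of_le x le_rfl)))
        (le_sup_of_le_right (le_sup_of_le_left (le_iSup_of_le x le_rfl)))
    · refine iSup_le fun y => ?_
      have hb : opNorm (appendMap (piBlock (fun _ : Fin k => inlL X₂ X₂') ∘ₗ Φ y)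
          (piBlock (fun _ : Fin k' => inrL X₂ X₂') ∘ₗ Φ' y)) ≤
          max (opNorm (Φ y)) (opNorm (Φ' y)) :=
        (opNorm_appendMap_le _ _).trans
          (max_le_max (opNorm_piIncl_comp_le _) (opNorm_piIncr_comp_le _))
      refine (ofReal_sq_le_sup (opNorm_nonneg _) hb).trans ?_
      exact sup_le (le_sup_of_le_left (le_sup_of_le_right (le_iSup_of_le y le_rfl)))
        (le_sup_of_le_right (le_sup_of_le_right (le_iSup_of_le y le_rfl)))

end main
end S7

/-- Direct sum property of the relative `γ₂`-norm:
(i) `γ₂(A ⊕ B | Δ ⊕ E) ≤ max(γ₂(A|Δ), γ₂(B|E))`;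
(ii) `γ₂(A ⊕ B | Δ) = max(γ₂(A|Δ), γ₂(B|Δ))`. -/
theorem statement7 {D₁ D₂ : Type} [Fintype D₁] [Fintype D₂]
    {X₁ X₂ X₁' X₂' Z₁ Z₂ Z₁' Z₂' : Type}
    [NormedAddCommGroup X₁] [InnerProductSpace ℂ X₁] [FiniteDimensional ℂ X₁]
    [NormedAddCommGroup X₂] [InnerProductSpace ℂ X₂] [FiniteDimensional ℂ X₂]
    [NormedAddCommGroup X₁'] [InnerProductSpace ℂ X₁'] [FiniteDimensional ℂ X₁']
    [NormedAddCommGroup X₂'] [InnerProductSpace ℂ X₂'] [FiniteDimensional ℂ X₂']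
    [NormedAddCommGroup Z₁] [InnerProductSpace ℂ Z₁] [FiniteDimensional ℂ Z₁]
    [NormedAddCommGroup Z₂] [InnerProductSpace ℂ Z₂] [FiniteDimensional ℂ Z₂]
    [NormedAddCommGroup Z₁'] [InnerProductSpace ℂ Z₁'] [FiniteDimensional ℂ Z₁']
    [NormedAddCommGroup Z₂'] [InnerProductSpace ℂ Z₂'] [FiniteDimensional ℂ Z₂']
    (A : D₁ → D₂ → (Z₂ →ₗ[ℂ] Z₁)) (B : D₁ → D₂ → (Z₂' →ₗ[ℂ] Z₁'))
    (Δ : D₁ → D₂ → (X₂ →ₗ[ℂ] X₁)) (E : D₁ → D₂ → (X₂' →ₗ[ℂ] X₁')) :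
    (relGamma2 (fun x y => dsum (A x y) (B x y)) (fun x y => dsum (Δ x y) (E x y)) ≤
        max (relGamma2 A Δ) (relGamma2 B E)) ∧
    (relGamma2 (fun x y => dsum (A x y) (B x y)) Δ =
        max (relGamma2 A Δ) (relGamma2 B Δ)) := by
  constructor
  · show _ ≤ _ ⊔ _
    exact S7.le_part1 A B Δ E
  · refine le_antisymm ?_ (max_le (S7.ge_A A B Δ) (S7.ge_B A B Δ))
    show _ ≤ _ ⊔ _
    exact S7.le_part2 A B Δ


end
end

section
/- Adversary lower bound for exact unitary implementation: let D be a finite set, X and Z finite-dimensional complex inner product spaces, O_x a unitary on X and V_x a unitary on Z for each x ∈ D. Suppose there exist a T-query quantum algorithm with oracle acting on X, with state space H, and a linear isometry ι : Z → H, such that for every x ∈ D and every ρ ∈ Z, A(O_x) ι(ρ) = ι(V_x ρ). Then γ₂((V_x − V_y)_{x,y∈D} | (O_x − O_y)_{x,y∈D}) ≤ T. -/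
noncomputable section

open scoped ENNReal ComplexOrder

/-- The state space `S ⊕ (X ⊗ ℂᵐ)` of a quantum query algorithm with oracle acting on `X`,
where the workspace `W₀` is realized as `ℂᵐ` and `X ⊗ ℂᵐ` as the `ℓ²`-sum of `m` copies
of `X`, and `⊕` is the `ℓ²`-direct sum. -/
abbrev stateSpace (S X : Type*) (m : ℕ) := WithLp 2 (S × PiLp 2 (fun _ : Fin m => X))

/-- The query operator `Q(O) = id_S ⊕ (O ⊗ id)`. -/
noncomputable def queryOp {X S : Type*}
    [NormedAddCommGroup X] [InnerProductSpace ℂ X]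
    [NormedAddCommGroup S] [InnerProductSpace ℂ S]
    (m : ℕ) (O : X →ₗ[ℂ] X) : stateSpace S X m →ₗ[ℂ] stateSpace S X m :=
  (WithLp.linearEquiv 2 ℂ (S × PiLp 2 (fun _ : Fin m => X))).symm.toLinearMap ∘ₗ
    (LinearMap.prodMap LinearMap.id (piBlock (fun _ : Fin m => O))) ∘ₗ
      (WithLp.linearEquiv 2 ℂ (S × PiLp 2 (fun _ : Fin m => X))).toLinearMap

/-- The unitary `A(O) = U_T ∘ Q(O)^{ε_T} ∘ ⋯ ∘ U_1 ∘ Q(O)^{ε_1} ∘ U_0` implemented by a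
`T`-query algorithm with unitaries `U` and query signs `sgn` (`true` = direct query
`Q(O)`, `false` = reverse query `Q(O)⁻¹ = Q(O*)`), run with input oracle `O`. -/
noncomputable def runAlg {X S : Type*}
    [NormedAddCommGroup X] [InnerProductSpace ℂ X] [FiniteDimensional ℂ X]
    [NormedAddCommGroup S] [InnerProductSpace ℂ S]
    (m : ℕ) :
    (T : ℕ) → (Fin (T + 1) → (stateSpace S X m →ₗ[ℂ] stateSpace S X m)) →
      (Fin T → Bool) → (X →ₗ[ℂ] X) →
      (stateSpace S X m →ₗ[ℂ] stateSpace S X m)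
  | 0, U, _, _ => U 0
  | T + 1, U, sgn, O =>
      U (Fin.last (T + 1)) ∘ₗ
        ((if sgn (Fin.last T) then queryOp m O else queryOp m (LinearMap.adjoint O)) ∘ₗ
          runAlg m T (fun t => U t.castSucc) (fun t => sgn t.castSucc) O)

namespace Statement11Aux

local notation "⟪" x ", " y "⟫" => @inner ℂ _ _ x y

/-- Forward composition `U n ∘ Q (n-1) ∘ ⋯ ∘ Q 0 ∘ U 0`. -/
noncomputable def chain {H : Type*} [AddCommGroup H] [Module ℂ H]
    (U Q : ℕ → (H →ₗ[ℂ] H)) : ℕ → (H →ₗ[ℂ] H)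
  | 0 => U 0
  | t + 1 => U (t + 1) ∘ₗ Q t ∘ₗ chain U Q t

theorem chain_congr {H : Type*} [AddCommGroup H] [Module ℂ H]
    (U U' Q Q' : ℕ → (H →ₗ[ℂ] H)) (n : ℕ)
    (hU : ∀ t ≤ n, U t = U' t) (hQ : ∀ t < n, Q t = Q' t) :
    chain U Q n = chain U' Q' n := by
  induction n with
  | zero => simpa [chain] using hU 0 le_rfl
  | succ n ih =>
      simp only [chain]
      rw [hU (n + 1) le_rfl, hQ n (Nat.lt_succ_self n),
        ih (fun t ht => hU t (ht.trans (Nat.le_succ n)))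
          (fun t ht => hQ t (ht.trans (Nat.lt_succ_self n)))]

theorem runAlg_eq_chain {X S : Type*}
    [NormedAddCommGroup X] [InnerProductSpace ℂ X] [FiniteDimensional ℂ X]
    [NormedAddCommGroup S] [InnerProductSpace ℂ S]
    (m : ℕ) (T : ℕ) (U : Fin (T + 1) → (stateSpace S X m →ₗ[ℂ] stateSpace S X m))
    (sgn : Fin T → Bool) (O : X →ₗ[ℂ] X) :
    runAlg m T U sgn O =
      chain (fun t => if h : t < T + 1 then U ⟨t, h⟩ else LinearMap.id)
        (fun t => if h : t < T then
            (if sgn ⟨t, h⟩ then queryOp m O else queryOp m (LinearMap.adjoint O))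
          else LinearMap.id) T := by
  induction T with
  | zero => simp [runAlg, chain]
  | succ T ih =>
      rw [runAlg, ih, chain]
      congr 1
      · rw [dif_pos (Nat.lt_succ_self (T + 1))]
        rfl
      congr 1
      · rw [dif_pos (Nat.lt_succ_self T)]
        rfl
      · exact chain_congr _ _ _ _ T
          (fun t ht => by
            rw [dif_pos (Nat.lt_succ_of_le ht), dif_pos (Nat.lt_succ_of_lt (Nat.lt_succ_of_le ht))]
            rfl)
          (fun t ht => by
            rw [dif_pos ht, dif_pos (Nat.lt_succ_of_lt ht)]
            rfl)

variable {E : Type*} [NormedAddCommGroup E] [InnerProductSpace ℂ E] [FiniteDimensional ℂ E]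

theorem unitary_inner {f : E →ₗ[ℂ] E} (hf : IsUnitaryMap f) (a b : E) :
    ⟪f a, f b⟫ = ⟪a, b⟫ := by
  rw [← LinearMap.adjoint_inner_right]
  have := LinearMap.ext_iff.mp hf.1 b
  simp only [LinearMap.comp_apply, LinearMap.id_apply] at this
  rw [this]

theorem norm_eq_of_inner_self_eq {F G : Type*} [NormedAddCommGroup F] [InnerProductSpace ℂ F]
    [NormedAddCommGroup G] [InnerProductSpace ℂ G] {a : F} {b : G}
    (h : ⟪a, a⟫ = ⟪b, b⟫) : ‖a‖ = ‖b‖ := by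
  have ha := inner_self_eq_norm_sq_to_K (𝕜 := ℂ) a
  have hb := inner_self_eq_norm_sq_to_K (𝕜 := ℂ) b
  rw [ha, hb] at h
  have h' : ‖a‖ ^ 2 = ‖b‖ ^ 2 := by exact_mod_cast h
  calc ‖a‖ = Real.sqrt (‖a‖ ^ 2) := (Real.sqrt_sq (norm_nonneg a)).symm
    _ = Real.sqrt (‖b‖ ^ 2) := by rw [h']
    _ = ‖b‖ := Real.sqrt_sq (norm_nonneg b)

theorem unitary_norm {f : E →ₗ[ℂ] E} (hf : IsUnitaryMap f) (a : E) :
    ‖f a‖ = ‖a‖ :=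
  norm_eq_of_inner_self_eq (unitary_inner hf a a)

theorem unitary_adjoint {f : E →ₗ[ℂ] E} (hf : IsUnitaryMap f) :
    IsUnitaryMap (LinearMap.adjoint f) :=
  ⟨by rw [LinearMap.adjoint_adjoint]; exact hf.2,
   by rw [LinearMap.adjoint_adjoint]; exact hf.1⟩

theorem piBlock_inner {ι : Type*} [Fintype ι] {O : E →ₗ[ℂ] E} (hO : IsUnitaryMap O)
    (v w : PiLp 2 (fun _ : ι => E)) :
    ⟪piBlock (fun _ : ι => O) v, piBlock (fun _ : ι => O) w⟫ = ⟪v, w⟫ := by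
  show (∑ i, ⟪O (v i), O (w i)⟫) = ∑ i, ⟪v i, w i⟫
  exact Finset.sum_congr rfl fun i _ => unitary_inner hO _ _

theorem piBlock_norm {ι : Type*} [Fintype ι] {O : E →ₗ[ℂ] E} (hO : IsUnitaryMap O)
    (v : PiLp 2 (fun _ : ι => E)) :
    ‖piBlock (fun _ : ι => O) v‖ = ‖v‖ :=
  norm_eq_of_inner_self_eq (piBlock_inner hO v v)

theorem queryOp_inner {X S : Type*}
    [NormedAddCommGroup X] [InnerProductSpace ℂ X] [FiniteDimensional ℂ X]
    [NormedAddCommGroup S] [InnerProductSpace ℂ S]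
    (m : ℕ) {O : X →ₗ[ℂ] X} (hO : IsUnitaryMap O) (ψ φ : stateSpace S X m) :
    ⟪queryOp m O ψ, queryOp m O φ⟫ = ⟪ψ, φ⟫ := by
  rw [WithLp.prod_inner_apply, WithLp.prod_inner_apply]
  exact congrArg₂ (· + ·) rfl (piBlock_inner hO ψ.snd φ.snd)

theorem snd_norm_le {α β : Type*} [NormedAddCommGroup α] [NormedAddCommGroup β]
    (ψ : WithLp 2 (α × β)) : ‖ψ.snd‖ ≤ ‖ψ‖ := by
  have h := WithLp.prod_norm_sq_eq_of_L2 ψ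
  nlinarith [norm_nonneg ψ.fst, norm_nonneg ψ.snd, norm_nonneg ψ, sq_nonneg ‖ψ.fst‖]

end Statement11Aux

/-- Adversary lower bound for exact unitary implementation: if a
`T`-query quantum algorithm with oracle acting on `X`, with state space `H`, together
with an isometric embedding `ι : Z → H`, implements the unitary `V_x` on (the copy of)
`Z` whenever its oracle is replaced by `O_x`, then `γ₂(V_x − V_y | O_x − O_y) ≤ T`. -/
theorem statement11 {D : Type} [Fintype D] {X Z S : Type}
    [NormedAddCommGroup X] [InnerProductSpace ℂ X] [FiniteDimensional ℂ X]
    [NormedAddCommGroup Z] [InnerProductSpace ℂ Z] [FiniteDimensional ℂ Z]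
    [NormedAddCommGroup S] [InnerProductSpace ℂ S] [FiniteDimensional ℂ S]
    (m T : ℕ)
    (O : D → (X →ₗ[ℂ] X)) (hO : ∀ x, IsUnitaryMap (O x))
    (V : D → (Z →ₗ[ℂ] Z)) (hV : ∀ x, IsUnitaryMap (V x))
    (U : Fin (T + 1) → (stateSpace S X m →ₗ[ℂ] stateSpace S X m))
    (hU : ∀ t, IsUnitaryMap (U t)) (sgn : Fin T → Bool)
    (ι : Z →ₗᵢ[ℂ] stateSpace S X m)
    (hrun : ∀ x (z : Z), runAlg m T U sgn (O x) (ι z) = ι (V x z)) :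
    relGamma2 (fun x y => V x - V y) (fun x y => O x - O y) ≤ (T : ℝ≥0∞) := by
  classical
  -- ℕ-indexed unitaries/queries and forward partial runs
  set U' : ℕ → (stateSpace S X m →ₗ[ℂ] stateSpace S X m) :=
    fun t => if h : t < T + 1 then U ⟨t, h⟩ else LinearMap.id with hU'def
  set Q' : D → ℕ → (stateSpace S X m →ₗ[ℂ] stateSpace S X m) :=
    fun x t => if h : t < T then
        (if sgn ⟨t, h⟩ then queryOp m (O x) else queryOp m (LinearMap.adjoint (O x)))
      else LinearMap.id with hQ'def
  set R : D → ℕ → (stateSpace S X m →ₗ[ℂ] stateSpace S X m) :=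
    fun x t => Statement11Aux.chain U' (Q' x) t with hRdef
  set sgn' : ℕ → Bool := fun t => if h : t < T then sgn ⟨t, h⟩ else true with hsgn'def
  have hUinner : ∀ (t : ℕ) (ψ φ : stateSpace S X m),
      inner (𝕜 := ℂ) (U' t ψ) (U' t φ) = inner (𝕜 := ℂ) ψ φ := by
    intro t ψ φ
    by_cases h : t < T + 1
    · simp only [hU'def, dif_pos h]
      exact Statement11Aux.unitary_inner (hU _) _ _
    · simp only [hU'def, dif_neg h]
      rfl
  have hQinner : ∀ x (t : ℕ) (ψ φ : stateSpace S X m),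
      inner (𝕜 := ℂ) (Q' x t ψ) (Q' x t φ) = inner (𝕜 := ℂ) ψ φ := by
    intro x t ψ φ
    by_cases h : t < T
    · simp only [hQ'def, dif_pos h]
      by_cases hs : sgn ⟨t, h⟩
      · simp only [hs, if_true]
        exact Statement11Aux.queryOp_inner m (hO x) _ _
      · simp only [hs, if_false]
        exact Statement11Aux.queryOp_inner m (Statement11Aux.unitary_adjoint (hO x)) _ _
    · simp only [hQ'def, dif_neg h]
      rfl
  have hRinner : ∀ x (t : ℕ) (ψ φ : stateSpace S X m),
      inner (𝕜 := ℂ) (R x t ψ) (R x t φ) = inner (𝕜 := ℂ) ψ φ := by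
    intro x t
    induction t with
    | zero => exact fun ψ φ => hUinner 0 ψ φ
    | succ t ih =>
        intro ψ φ
        show inner (𝕜 := ℂ) (U' (t + 1) (Q' x t (R x t ψ))) (U' (t + 1) (Q' x t (R x t φ)))
          = inner (𝕜 := ℂ) ψ φ
        rw [hUinner, hQinner]
        exact ih ψ φ
  have hRnorm : ∀ x (t : ℕ) (ψ : stateSpace S X m), ‖R x t ψ‖ = ‖ψ‖ := fun x t ψ =>
    Statement11Aux.norm_eq_of_inner_self_eq (hRinner x t ψ ψ)
  have htel : ∀ x y (u v : stateSpace S X m) (t : ℕ),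
      inner (𝕜 := ℂ) (R x t u) (R y t v) = inner (𝕜 := ℂ) u v +
        ∑ s ∈ Finset.range t,
          (inner (𝕜 := ℂ) (Q' x s (R x s u)) (Q' y s (R y s v))
            - inner (𝕜 := ℂ) (R x s u) (R y s v)) := by
    intro x y u v t
    induction t with
    | zero =>
        simp only [Finset.range_zero, Finset.sum_empty, add_zero]
        exact hUinner 0 u v
    | succ t ih =>
        have h1 : inner (𝕜 := ℂ) (R x (t + 1) u) (R y (t + 1) v)
            = inner (𝕜 := ℂ) (Q' x t (R x t u)) (Q' y t (R y t v)) := by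
          show inner (𝕜 := ℂ) (U' (t + 1) (Q' x t (R x t u))) (U' (t + 1) (Q' y t (R y t v))) = _
          exact hUinner _ _ _
        rw [h1, Finset.sum_range_succ, ← add_assoc, ← ih]
        ring
  have hR_run : ∀ x, R x T = runAlg m T U sgn (O x) := fun x =>
    (Statement11Aux.runAlg_eq_chain m T U sgn (O x)).symm
  -- the projection onto the X ⊗ ℂ^m part of the state space
  set Pr : stateSpace S X m →ₗ[ℂ] PiLp 2 (fun _ : Fin m => X) :=
    (LinearMap.snd ℂ S (PiLp 2 (fun _ : Fin m => X))) ∘ₗ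
      (WithLp.linearEquiv 2 ℂ (S × PiLp 2 (fun _ : Fin m => X))).toLinearMap with hPrdef
  -- the building blocks of the factorization
  set υ : D → ℕ → (Z →ₗ[ℂ] PiLp 2 (fun _ : Fin m => X)) := fun x t =>
    (if sgn' t then piBlock (fun _ : Fin m => O x) else -LinearMap.id) ∘ₗ
      Pr ∘ₗ R x t ∘ₗ (ι.toLinearMap ∘ₗ LinearMap.adjoint (V x)) with hυdef
  set φf : D → ℕ → (Z →ₗ[ℂ] PiLp 2 (fun _ : Fin m => X)) := fun y t =>
    (if sgn' t then LinearMap.id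
      else piBlock (fun _ : Fin m => LinearMap.adjoint (O y))) ∘ₗ
      Pr ∘ₗ R y t ∘ₗ ι.toLinearMap with hφfdef
  -- the key identity
  have hmain : ∀ x y (w z : Z),
      inner (𝕜 := ℂ) w ((V x - V y) z) =
        ∑ t : Fin T, ∑ j : Fin m,
          inner (𝕜 := ℂ) (υ x ↑t w j) ((O x - O y) (φf y ↑t z j)) := by
    intro x y w z
    set u := ι (LinearMap.adjoint (V x) w) with hudef
    set v := ι z with hvdef
    have hT := htel x y u v T
    have hx : R x T u = ι w := by
      rw [hR_run x, hudef, hrun x]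
      congr 1
      have := LinearMap.ext_iff.mp (hV x).2 w
      simpa using this
    have hy : R y T v = ι (V y z) := by rw [hR_run y, hvdef]; exact hrun y z
    rw [hx, hy, ι.inner_map_map] at hT
    have hu : inner (𝕜 := ℂ) u v = inner (𝕜 := ℂ) w (V x z) := by
      rw [hudef, hvdef, ι.inner_map_map, LinearMap.adjoint_inner_left]
    rw [hu] at hT
    -- per-query computation
    have hterm : ∀ s, s < T →
        (∑ j : Fin m, inner (𝕜 := ℂ) (υ x s w j) ((O x - O y) (φf y s z j)))
          = -(inner (𝕜 := ℂ) (Q' x s (R x s u)) (Q' y s (R y s v))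
              - inner (𝕜 := ℂ) (R x s u) (R y s v)) := by
      intro s hs
      have hQx : Q' x s = (if sgn' s then queryOp m (O x)
          else queryOp m (LinearMap.adjoint (O x))) := by
        simp only [hQ'def, hsgn'def, dif_pos hs]
      have hQy : Q' y s = (if sgn' s then queryOp m (O y)
          else queryOp m (LinearMap.adjoint (O y))) := by
        simp only [hQ'def, hsgn'def, dif_pos hs]
      set a := R x s u with hadef
      set b := R y s v with hbdef
      by_cases cs : sgn' s
      · -- direct query
        have hl : ∀ j : Fin m, υ x s w j = O x (a.snd j) := by
          intro j
          simp only [hυdef, cs, if_true, LinearMap.comp_apply, hadef, hudef]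
          rfl
        have hr : ∀ j : Fin m, φf y s z j = b.snd j := by
          intro j
          simp only [hφfdef, cs, if_true, LinearMap.comp_apply, hbdef, hvdef]
          rfl
        have hqa : inner (𝕜 := ℂ) (Q' x s a) (Q' y s b)
            = inner (𝕜 := ℂ) a.fst b.fst
              + ∑ j : Fin m, inner (𝕜 := ℂ) (O x (a.snd j)) (O y (b.snd j)) := by
          rw [hQx, hQy, if_pos cs, if_pos cs]
          rfl
        have hab : inner (𝕜 := ℂ) a b
            = inner (𝕜 := ℂ) a.fst b.fst
              + ∑ j : Fin m, inner (𝕜 := ℂ) (a.snd j) (b.snd j) := rfl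
        rw [hqa, hab]
        simp only [hl, hr, LinearMap.sub_apply, inner_sub_right]
        rw [Finset.sum_sub_distrib]
        have : ∀ j : Fin m, inner (𝕜 := ℂ) (O x (a.snd j)) (O x (b.snd j))
            = inner (𝕜 := ℂ) (a.snd j) (b.snd j) :=
          fun j => Statement11Aux.unitary_inner (hO x) _ _
        simp only [this]
        ring
      · -- reverse query
        have hl : ∀ j : Fin m, υ x s w j = -(a.snd j) := by
          intro j
          simp only [hυdef, cs, if_false, LinearMap.comp_apply, hadef, hudef]
          rfl
        have hr : ∀ j : Fin m, φf y s z j = LinearMap.adjoint (O y) (b.snd j) := by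
          intro j
          simp only [hφfdef, cs, if_false, LinearMap.comp_apply, hbdef, hvdef]
          rfl
        have hqa : inner (𝕜 := ℂ) (Q' x s a) (Q' y s b)
            = inner (𝕜 := ℂ) a.fst b.fst
              + ∑ j : Fin m, inner (𝕜 := ℂ) (LinearMap.adjoint (O x) (a.snd j))
                  (LinearMap.adjoint (O y) (b.snd j)) := by
          rw [hQx, hQy, if_neg cs, if_neg cs]
          rfl
        have hab : inner (𝕜 := ℂ) a b
            = inner (𝕜 := ℂ) a.fst b.fst
              + ∑ j : Fin m, inner (𝕜 := ℂ) (a.snd j) (b.snd j) := rfl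
        rw [hqa, hab]
        have hOy : ∀ c : X, O y (LinearMap.adjoint (O y) c) = c := by
          intro c
          have := LinearMap.ext_iff.mp (hO y).2 c
          simpa using this
        simp only [hl, hr, LinearMap.sub_apply, inner_sub_right, inner_neg_left,
          LinearMap.adjoint_inner_left, hOy]
        rw [Finset.sum_sub_distrib]
        simp only [Finset.sum_neg_distrib]
        ring
    -- put things together
    have hsub : inner (𝕜 := ℂ) w ((V x - V y) z)
        = inner (𝕜 := ℂ) w (V x z) - inner (𝕜 := ℂ) w (V y z) := by
      simp [LinearMap.sub_apply, inner_sub_right]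
    rw [hsub]
    have : inner (𝕜 := ℂ) w (V x z) - inner (𝕜 := ℂ) w (V y z)
        = ∑ s ∈ Finset.range T,
            -(inner (𝕜 := ℂ) (Q' x s (R x s u)) (Q' y s (R y s v))
              - inner (𝕜 := ℂ) (R x s u) (R y s v)) := by
      rw [Finset.sum_neg_distrib]
      have := hT
      linear_combination -this
    rw [this, ← Finset.sum_congr rfl (fun s hs => hterm s (Finset.mem_range.mp hs))]
    exact (Fin.sum_univ_eq_sum_range
      (fun s => ∑ j : Fin m, inner (𝕜 := ℂ) (υ x s w j) ((O x - O y) (φf y s z j))) T).symm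
  -- stack the blocks
  set e : Fin T × Fin m ≃ Fin (T * m) := finProdFinEquiv with hedef
  set Υ : D → (Z →ₗ[ℂ] PiLp 2 (fun _ : Fin (T * m) => X)) := fun x =>
    (WithLp.linearEquiv 2 ℂ (∀ _ : Fin (T * m), X)).symm.toLinearMap ∘ₗ
      LinearMap.pi (fun i =>
        (LinearMap.proj ((e.symm i).2) : (∀ _ : Fin m, X) →ₗ[ℂ] X) ∘ₗ
          (WithLp.linearEquiv 2 ℂ (∀ _ : Fin m, X)).toLinearMap ∘ₗ
            υ x ↑((e.symm i).1)) with hΥdef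
  set Φ : D → (Z →ₗ[ℂ] PiLp 2 (fun _ : Fin (T * m) => X)) := fun y =>
    (WithLp.linearEquiv 2 ℂ (∀ _ : Fin (T * m), X)).symm.toLinearMap ∘ₗ
      LinearMap.pi (fun i =>
        (LinearMap.proj ((e.symm i).2) : (∀ _ : Fin m, X) →ₗ[ℂ] X) ∘ₗ
          (WithLp.linearEquiv 2 ℂ (∀ _ : Fin m, X)).toLinearMap ∘ₗ
            φf y ↑((e.symm i).1)) with hΦdef
  have hΥapp : ∀ x (w : Z) (i : Fin (T * m)),
      Υ x w i = υ x ↑((e.symm i).1) w ((e.symm i).2) := fun x w i => rfl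
  have hΦapp : ∀ y (z : Z) (i : Fin (T * m)),
      Φ y z i = φf y ↑((e.symm i).1) z ((e.symm i).2) := fun y z i => rfl
  -- the factorization constraint
  have hcon : ∀ x y, V x - V y =
      LinearMap.adjoint (Υ x) ∘ₗ piBlock (fun _ : Fin (T * m) => O x - O y) ∘ₗ Φ y := by
    intro x y
    apply LinearMap.ext; intro z
    refine ext_inner_left ℂ fun w => ?_
    rw [LinearMap.comp_apply, LinearMap.comp_apply, LinearMap.adjoint_inner_right]
    have hrhs : inner (𝕜 := ℂ) (Υ x w) (piBlock (fun _ : Fin (T * m) => O x - O y) (Φ y z))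
        = ∑ i : Fin (T * m), inner (𝕜 := ℂ) (υ x ↑((e.symm i).1) w ((e.symm i).2))
            ((O x - O y) (φf y ↑((e.symm i).1) z ((e.symm i).2))) := rfl
    rw [hrhs, ← Equiv.sum_comp e, Fintype.sum_prod_type, hmain x y w z]
    refine Finset.sum_congr rfl fun t _ => Finset.sum_congr rfl fun j _ => ?_
    beta_reduce
    have hp : e.symm (e (t, j)) = (t, j) := Equiv.symm_apply_apply _ _
    rw [hp]
  -- norm bounds for the blocks
  have hυnorm : ∀ x (t : ℕ) (w : Z), ‖υ x t w‖ ≤ ‖w‖ := by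
    intro x t w
    have h1 : ‖Pr (R x t (ι (LinearMap.adjoint (V x) w)))‖ ≤ ‖w‖ := by
      calc ‖Pr (R x t (ι (LinearMap.adjoint (V x) w)))‖
          = ‖(R x t (ι (LinearMap.adjoint (V x) w))).snd‖ := rfl
        _ ≤ ‖R x t (ι (LinearMap.adjoint (V x) w))‖ := Statement11Aux.snd_norm_le _
        _ = ‖ι (LinearMap.adjoint (V x) w)‖ := hRnorm x t _
        _ = ‖LinearMap.adjoint (V x) w‖ := ι.norm_map _
        _ = ‖w‖ := Statement11Aux.unitary_norm (Statement11Aux.unitary_adjoint (hV x)) w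
    by_cases cs : sgn' t
    · calc ‖υ x t w‖
          = ‖piBlock (fun _ : Fin m => O x) (Pr (R x t (ι (LinearMap.adjoint (V x) w))))‖ := by
            simp only [hυdef, cs, if_true, LinearMap.comp_apply, LinearIsometry.coe_toLinearMap]
        _ = ‖Pr (R x t (ι (LinearMap.adjoint (V x) w)))‖ :=
            Statement11Aux.piBlock_norm (hO x) _
        _ ≤ ‖w‖ := h1
    · calc ‖υ x t w‖
          = ‖-(Pr (R x t (ι (LinearMap.adjoint (V x) w))))‖ := by
            simp only [hυdef, cs, Bool.false_eq_true, if_false, LinearMap.comp_apply,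
              LinearMap.neg_apply, LinearMap.id_apply, LinearIsometry.coe_toLinearMap]
        _ = ‖Pr (R x t (ι (LinearMap.adjoint (V x) w)))‖ := norm_neg _
        _ ≤ ‖w‖ := h1
  have hφnorm : ∀ y (t : ℕ) (z : Z), ‖φf y t z‖ ≤ ‖z‖ := by
    intro y t z
    have h1 : ‖Pr (R y t (ι z))‖ ≤ ‖z‖ := by
      calc ‖Pr (R y t (ι z))‖ = ‖(R y t (ι z)).snd‖ := rfl
        _ ≤ ‖R y t (ι z)‖ := Statement11Aux.snd_norm_le _
        _ = ‖ι z‖ := hRnorm y t _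
        _ = ‖z‖ := ι.norm_map _
    by_cases cs : sgn' t
    · calc ‖φf y t z‖ = ‖Pr (R y t (ι z))‖ := by
            simp only [hφfdef, cs, if_true, LinearMap.comp_apply, LinearMap.id_apply,
              LinearIsometry.coe_toLinearMap]
        _ ≤ ‖z‖ := h1
    · calc ‖φf y t z‖
          = ‖piBlock (fun _ : Fin m => LinearMap.adjoint (O y)) (Pr (R y t (ι z)))‖ := by
            simp only [hφfdef, cs, Bool.false_eq_true, if_false, LinearMap.comp_apply,
              LinearIsometry.coe_toLinearMap]
        _ = ‖Pr (R y t (ι z))‖ :=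
            Statement11Aux.piBlock_norm (Statement11Aux.unitary_adjoint (hO y)) _
        _ ≤ ‖z‖ := h1
  -- norm bounds for the stacked maps
  have hstacksq : ∀ (g : ℕ → (Z →ₗ[ℂ] PiLp 2 (fun _ : Fin m => X)))
      (G : Z →ₗ[ℂ] PiLp 2 (fun _ : Fin (T * m) => X)) (w : Z),
      (∀ i : Fin (T * m), G w i = g ↑((e.symm i).1) w ((e.symm i).2)) →
      (∀ t : ℕ, ‖g t w‖ ≤ ‖w‖) →
      ‖G w‖ ^ 2 ≤ (T : ℝ) * ‖w‖ ^ 2 := by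
    intro g G w happ hle
    rw [PiLp.norm_sq_eq_of_L2]
    have h2 : ∑ i : Fin (T * m), ‖G w i‖ ^ 2
        = ∑ t : Fin T, ∑ j : Fin m, ‖g ↑t w j‖ ^ 2 := by
      rw [← Equiv.sum_comp e (fun i => ‖G w i‖ ^ 2), Fintype.sum_prod_type]
      refine Finset.sum_congr rfl fun t _ => Finset.sum_congr rfl fun j _ => ?_
      rw [happ (e (t, j))]
      have hp : e.symm (e (t, j)) = (t, j) := Equiv.symm_apply_apply _ _
      rw [hp]
    rw [h2]
    calc ∑ t : Fin T, ∑ j : Fin m, ‖g ↑t w j‖ ^ 2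
        ≤ ∑ _t : Fin T, ‖w‖ ^ 2 := by
          refine Finset.sum_le_sum fun t _ => ?_
          rw [← PiLp.norm_sq_eq_of_L2]
          exact pow_le_pow_left₀ (norm_nonneg _) (hle ↑t) 2
      _ = (T : ℝ) * ‖w‖ ^ 2 := by
          rw [Finset.sum_const, Finset.card_univ, Fintype.card_fin, nsmul_eq_mul]
  -- conclude the operator norm bounds
  have hopbound : ∀ (G : Z →ₗ[ℂ] PiLp 2 (fun _ : Fin (T * m) => X)),
      (∀ w : Z, ‖G w‖ ^ 2 ≤ (T : ℝ) * ‖w‖ ^ 2) →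
      ENNReal.ofReal (opNorm G ^ 2) ≤ (T : ℝ≥0∞) := by
    intro G hG
    have hop : opNorm G ≤ Real.sqrt T := by
      refine ContinuousLinearMap.opNorm_le_bound _ (Real.sqrt_nonneg _) fun w => ?_
      have h3 : ‖G w‖ ≤ Real.sqrt ((T : ℝ) * ‖w‖ ^ 2) := by
        rw [← Real.sqrt_sq (norm_nonneg (G w))]
        exact Real.sqrt_le_sqrt (hG w)
      calc ‖LinearMap.toContinuousLinearMap G w‖ = ‖G w‖ := rfl
        _ ≤ Real.sqrt ((T : ℝ) * ‖w‖ ^ 2) := h3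
        _ = Real.sqrt T * ‖w‖ := by
            rw [Real.sqrt_mul (by positivity), Real.sqrt_sq (norm_nonneg w)]
    have hsq : opNorm G ^ 2 ≤ (T : ℝ) := by
      calc opNorm G ^ 2 ≤ Real.sqrt T ^ 2 := pow_le_pow_left₀ (norm_nonneg _) hop 2
        _ = (T : ℝ) := Real.sq_sqrt (by positivity)
    calc ENNReal.ofReal (opNorm G ^ 2) ≤ ENNReal.ofReal (T : ℝ) :=
          ENNReal.ofReal_le_ofReal hsq
      _ = (T : ℝ≥0∞) := ENNReal.ofReal_natCast T
  -- final assembly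
  have hle : relGamma2 (fun x y => V x - V y) (fun x y => O x - O y)
      ≤ (⨆ x, ENNReal.ofReal (opNorm (Υ x) ^ 2)) ⊔ (⨆ y, ENNReal.ofReal (opNorm (Φ y) ^ 2)) :=
    iInf_le_of_le (T * m) (iInf_le_of_le Υ (iInf_le_of_le Φ (iInf_le_of_le hcon le_rfl)))
  refine hle.trans (sup_le (iSup_le fun x => ?_) (iSup_le fun y => ?_))
  · exact hopbound (Υ x) fun w =>
      hstacksq (fun t => υ x t) (Υ x) w (hΥapp x w) (fun t => hυnorm x t w)
  · exact hopbound (Φ y) fun z =>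
      hstacksq (fun t => φf y t) (Φ y) z (hΦapp y z) (fun t => hφnorm y t z)

end
end
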